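/- arXiv:0811.0290 — 9 statements merged into one kernel-verified Lean document; each statement's English description precedes it below -/
import Mathlib

section
/- For every odd positive integer c, the sequence a^{(c)}(n) = 2·m_2(n) + c contains infinitely many composite numbers; that is, the set of n ∈ ℕ for which 2·m_2(n) + c is composite (greater than 1 and not prime) is infinite. -/
/-- Moser function `m_r(n)`: reinterpret the base-`r` digits of `n` as base-`r²` digits,
i.e. `m_r(n) = Σ_i ν_i r^(2i)` where `n = Σ_i ν_i r^i` is the base-`r` expansion. -/
def moser (r n : ℕ) : ℕ := Nat.ofDigits (r ^ 2) (Nat.digits r n)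

/-- `s^(r)_n = r · m_r(n−1) + 1` for `n ≥ 1`. -/
def moserS (r n : ℕ) : ℕ := r * moser r (n - 1) + 1

/-- The `i`-th base-`r` digit of `n` (0 if beyond the expansion). -/
def dig (r n i : ℕ) : ℕ := (Nat.digits r n).getD i 0

/-- Josephus–Groër survivor function: with `M = N` if `N` is odd, `M = N − 1` otherwise,
and `M = Σ_j b_j 2^j` the binary expansion, `W(N) = 1 + Σ_{j odd} b_j 2^j`. -/
def W (N : ℕ) : ℕ :=
  let M := if N % 2 = 1 then N else N - 1
  1 + ((((Nat.digits 2 M).zipIdx.map Prod.swap).filter (fun p => p.1 % 2 = 1)).map (fun p => p.2 * 2 ^ p.1)).sum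

lemma moser_two_pow_sub_one_succ (j : ℕ) :
    moser 2 (2 ^ (j + 1) - 1) = 1 + 4 * moser 2 (2 ^ j - 1) := by
  have h1 : 1 ≤ 2 ^ j := Nat.one_le_two_pow
  have hn : 0 < 2 ^ (j + 1) - 1 := by
    have : 2 ≤ 2 ^ (j + 1) := by
      calc 2 = 2 ^ 1 := rfl
      _ ≤ 2 ^ (j + 1) := Nat.pow_le_pow_right (by norm_num) (by omega)
    omega
  have hmod : (2 ^ (j + 1) - 1) % 2 = 1 := by
    have : 2 ^ (j + 1) = 2 * 2 ^ j := by ring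
    omega
  have hdiv : (2 ^ (j + 1) - 1) / 2 = 2 ^ j - 1 := by
    have : 2 ^ (j + 1) = 2 * 2 ^ j := by ring
    omega
  unfold moser
  rw [Nat.digits_def' (le_refl 2) hn, hmod, hdiv, Nat.ofDigits_cons]
  norm_num

lemma moser_mod_three (j : ℕ) : moser 2 (2 ^ j - 1) % 3 = j % 3 := by
  induction j with
  | zero => simp [moser]
  | succ j ih =>
    rw [moser_two_pow_sub_one_succ]
    omega

lemma moser_ge (n : ℕ) : n ≤ moser 2 n := by
  conv_lhs => rw [← Nat.ofDigits_digits 2 n]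
  exact Nat.ofDigits_monotone _ (by norm_num)

/-- For every odd positive `c`, the set of `n` with `2·m_2(n) + c` composite is infinite. -/
theorem moser_infinitely_many_composites (c : ℕ) (hc : Odd c) (hc0 : 0 < c) :
    {n : ℕ | 1 < 2 * moser 2 n + c ∧ ¬ Nat.Prime (2 * moser 2 n + c)}.Infinite := by
  apply Set.infinite_of_injective_forall_mem (f := fun t : ℕ => 2 ^ (c + 3 * t + 3) - 1)
  case hi =>
    intro a b hab
    simp only at hab
    have ha : 1 ≤ 2 ^ (c + 3 * a + 3) := Nat.one_le_two_pow
    have hb : 1 ≤ 2 ^ (c + 3 * b + 3) := Nat.one_le_two_pow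
    have : 2 ^ (c + 3 * a + 3) = 2 ^ (c + 3 * b + 3) := by omega
    have := Nat.pow_right_injective (le_refl 2) this
    omega
  case hf =>
    intro t
    set j := c + 3 * t + 3 with hj
    set m := moser 2 (2 ^ j - 1) with hm
    have hmod : m % 3 = j % 3 := moser_mod_three j
    have h3 : (2 * m + c) % 3 = 0 := by omega
    have hge : 2 ^ j - 1 ≤ m := moser_ge _
    have hjge : 8 ≤ 2 ^ j := by
      calc (8:ℕ) = 2 ^ 3 := rfl
      _ ≤ 2 ^ j := Nat.pow_le_pow_right (by norm_num) (by omega)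
    have hbig : 3 < 2 * m + c := by omega
    refine ⟨by omega, fun hp => ?_⟩
    rcases (Nat.Prime.eq_one_or_self_of_dvd hp 3 (by omega)) with h | h <;> omega
end

section
/- There is no set T of prime numbers and no constant C such that every odd integer m ≥ C is expressible as a sum m = p + 2q with p, q ∈ T in exactly one way; that is, for every set T of primes and every C there exists an odd m ≥ C for which the number of pairs (p, q) ∈ T × T with m = p + 2q is not equal to 1. -/
open scoped ENNReal

namespace NoUniqueRep


lemma bern (e : ℝ≥0∞) (he : e ≤ 1) (n : ℕ) : 1 ≤ (1 - e)^n + n * e := by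
  induction n with
  | zero => simp
  | succ n ih =>
    have h1 : (1:ℝ≥0∞) = (1 - e) + e := (tsub_add_cancel_of_le he).symm
    calc (1:ℝ≥0∞) = (1 - e) * 1 + e := by rw [mul_one, ← h1]
      _ ≤ (1 - e) * ((1 - e)^n + n * e) + e := by gcongr
      _ = (1 - e)^(n+1) + (1 - e) * (n * e) + e := by ring
      _ ≤ (1 - e)^(n+1) + 1 * (n * e) + e := by gcongr; exact tsub_le_self
      _ = (1 - e)^(n+1) + (↑(n+1)) * e := by push_cast; ring

lemma tsum_shift (t : ℝ≥0∞) (c : ℕ) :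
    ∑' k : ℕ, t^(c + 6*k) = t^c * ∑' k : ℕ, (t^6)^k := by
  rw [← ENNReal.tsum_mul_left]
  congr 1; ext k; rw [pow_add, pow_mul]

lemma tsum_mod (t : ℝ≥0∞) (ht : t ≠ 0) (ρ : ℕ) (hρ : ρ < 6) :
    ∑' m : ℕ, (if m % 6 = ρ then t^m else 0) = t^ρ * ∑' k : ℕ, (t^6)^k := by
  rw [← tsum_shift]
  refine tsum_eq_tsum_of_ne_zero_bij (fun k => ρ + 6 * k.1) ?_ ?_ ?_
  · intro a b hab
    ext
    simpa using hab
  · intro m hm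
    simp only [Function.mem_support, ne_eq, ite_eq_right_iff, not_forall] at hm
    obtain ⟨h1, -⟩ := hm
    refine ⟨⟨m / 6, ?_⟩, by show ρ + 6 * (m/6) = m; omega⟩
    simp only [Function.mem_support, ne_eq]
    exact pow_ne_zero _ ht
  · intro x
    have : (ρ + 6 * x.1) % 6 = ρ := by omega
    simp [this]

lemma count_lt (C : ℕ) : ∑' m : ℕ, (if m < C then (1:ℝ≥0∞) else 0) = C := by
  rw [tsum_eq_sum (s := Finset.range C) (by intro b hb; simp at hb; simp [hb])]
  rw [Finset.sum_congr rfl (fun b hb => if_pos (Finset.mem_range.mp hb))]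
  simp

lemma four_mul_le_sq (x y : ℝ≥0∞) : 4 * (x * y) ≤ (x + y)^2 := by
  rcases le_total x y with h | h
  · obtain ⟨c, rfl⟩ := exists_add_of_le h
    calc 4 * (x * (x + c)) = 4*x^2 + 4*(x*c) := by ring
      _ ≤ 4*x^2 + (4*(x*c) + c^2) := add_le_add_right (le_add_right le_rfl) _
      _ = (x + (x + c))^2 := by ring
  · obtain ⟨c, rfl⟩ := exists_add_of_le h
    calc 4 * ((y + c) * y) = 4*y^2 + 4*(y*c) := by ring
      _ ≤ 4*y^2 + (4*(y*c) + c^2) := add_le_add_right (le_add_right le_rfl) _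
      _ = ((y + c) + y)^2 := by ring

theorem infinite_case (T : Set ℕ) (hT : ∀ p ∈ T, Nat.Prime p) (C : ℕ)
    (h : ∀ m : ℕ, Odd m → C ≤ m →
      ∃! pq : ℕ × ℕ, pq.1 ∈ T ∧ pq.2 ∈ T ∧ m = pq.1 + 2 * pq.2)
    (hinf : (T \ {2, 3}).Infinite) : False := by
  classical
  obtain ⟨F, hFT, hFcard⟩ := hinf.exists_subset_card_eq 2000
  set B := F.sup id with hBdef
  set K : ℕ := C^2 + 1 with hKdef
  set M : ℕ := 1000 * K with hMdef
  set n₀ : ℕ := 24*M + 4*B + 8*C + 100 with hn₀def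
  set e : ℝ≥0∞ := (n₀ : ℝ≥0∞)⁻¹ with hedef
  set t : ℝ≥0∞ := 1 - e with htdef
  have hn₀0 : (n₀:ℝ≥0∞) ≠ 0 := by
    simp only [ne_eq, Nat.cast_eq_zero]; omega
  have hn₀top : (n₀:ℝ≥0∞) ≠ ⊤ := ENNReal.natCast_ne_top _
  have helt1 : e < 1 := by
    rw [hedef]
    exact ENNReal.inv_lt_one.mpr (by exact_mod_cast by omega)
  have he1 : e ≤ 1 := le_of_lt helt1
  have ht0 : t ≠ 0 := by
    rw [htdef]
    intro h0
    rw [tsub_eq_zero_iff_le] at h0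
    exact absurd h0 (not_le.mpr helt1)
  have ht1 : t ≤ 1 := by rw [htdef]; exact tsub_le_self
  have htop : t ≠ ⊤ := ne_top_of_le_ne_top ENNReal.one_ne_top ht1
  have hsub : (1:ℝ≥0∞) - t = e := by
    rw [htdef]; exact ENNReal.sub_sub_cancel ENNReal.one_ne_top he1
  have hmul : ∀ n : ℕ, 2 * n ≤ n₀ → (1:ℝ≥0∞) ≤ 2 * t^n := by
    intro n hn
    have hb := bern e he1 n
    have h2 : (2:ℝ≥0∞) * (n * e) ≤ 1 := by
      calc (2:ℝ≥0∞) * (n * e) = ((2*n : ℕ) : ℝ≥0∞) * e := by push_cast; ring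
        _ ≤ (n₀:ℝ≥0∞) * e := mul_le_mul_left (by exact_mod_cast hn) e
        _ = 1 := by rw [hedef]; exact ENNReal.mul_inv_cancel hn₀0 hn₀top
    have : (1:ℝ≥0∞) + 1 ≤ 2 * t^n + 1 := by
      calc (1:ℝ≥0∞) + 1 = 2 * 1 := by ring
        _ ≤ 2 * ((1-e)^n + n*e) := by gcongr
        _ = 2 * t^n + 2*(n*e) := by rw [htdef]; ring
        _ ≤ 2 * t^n + 1 := add_le_add_right h2 _
    exact (ENNReal.add_le_add_iff_right ENNReal.one_ne_top).mp this
  have hmul4 : ∀ n : ℕ, 4 * n ≤ n₀ → (3:ℝ≥0∞) ≤ 4 * t^n := by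
    intro n hn
    have hb := bern e he1 n
    have h2 : (4:ℝ≥0∞) * (n * e) ≤ 1 := by
      calc (4:ℝ≥0∞) * (n * e) = ((4*n : ℕ) : ℝ≥0∞) * e := by push_cast; ring
        _ ≤ (n₀:ℝ≥0∞) * e := mul_le_mul_left (by exact_mod_cast hn) e
        _ = 1 := by rw [hedef]; exact ENNReal.mul_inv_cancel hn₀0 hn₀top
    have : (3:ℝ≥0∞) + 1 ≤ 4 * t^n + 1 := by
      calc (3:ℝ≥0∞) + 1 = 4 * 1 := by ring
        _ ≤ 4 * ((1-e)^n + n*e) := by gcongr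
        _ = 4 * t^n + 4*(n*e) := by rw [htdef]; ring
        _ ≤ 4 * t^n + 1 := add_le_add_right h2 _
    exact (ENNReal.add_le_add_iff_right ENNReal.one_ne_top).mp this
  -- geometric series facts
  set X : ℝ≥0∞ := ∑' k : ℕ, (t^6)^k with hXdef
  have hXtop : X ≠ ⊤ := by
    have h1 : X ≤ ∑' k : ℕ, t^k := by
      rw [hXdef]
      refine ENNReal.tsum_le_tsum (fun k => ?_)
      rw [← pow_mul]
      exact pow_le_pow_of_le_one (zero_le) ht1 (by omega)
    rw [ENNReal.tsum_geometric, hsub, hedef, inv_inv] at h1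
    exact ne_top_of_le_ne_top hn₀top h1
  have hXM : (M:ℝ≥0∞) ≤ X := by
    calc (M:ℝ≥0∞) = M * 1 := (mul_one _).symm
      _ ≤ M * (2 * t^(12*M)) := by gcongr; exact hmul (12*M) (by omega)
      _ = (Finset.range (2*M)).card • t^(12*M) := by
          rw [Finset.card_range, nsmul_eq_mul]; push_cast; ring
      _ ≤ ∑ k ∈ Finset.range (2*M), (t^6)^k := by
          refine Finset.card_nsmul_le_sum _ _ _ (fun k hk => ?_)
          rw [← pow_mul]
          exact pow_le_pow_of_le_one (zero_le) ht1
            (by simp only [Finset.mem_range] at hk; omega)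
      _ ≤ X := ENNReal.sum_le_tsum _
  have hX0 : X ≠ 0 := by
    intro hc
    rw [hc] at hXM
    have : M = 0 := by exact_mod_cast le_zero_iff.mp hXM
    omega
  -- chooser for representations
  have hpair : ∀ m : ℕ, m % 2 = 1 → C ≤ m →
      ∃ pq : ℕ × ℕ, pq.1 ∈ T ∧ pq.2 ∈ T ∧ m = pq.1 + 2 * pq.2 := by
    intro m h1 h2
    exact (h m (Nat.odd_iff.mpr h1) h2).exists
  choose! g hg1 hg2 hg3 using hpair
  -- class-divided generating functions
  set pf : ℕ → ℕ → ℝ≥0∞ :=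
    fun i p => if p ∈ T ∧ p % 2 = 1 ∧ p % 3 = i then t^p else 0 with hpf
  set qf : ℕ → ℕ → ℝ≥0∞ :=
    fun j q => if q ∈ T ∧ q % 3 = j then t^(2*q) else 0 with hqf
  set P : ℕ → ℝ≥0∞ := fun i => ∑' p : ℕ, pf i p with hP
  set Q : ℕ → ℝ≥0∞ := fun j => ∑' q : ℕ, qf j q with hQ
  set Nf : ℕ → ℕ → ℝ≥0∞ :=
    fun r m => if m % 2 = 1 ∧ C ≤ m ∧ m % 3 = r then t^m else 0 with hNf
  set NN : ℕ → ℝ≥0∞ := fun r => ∑' m : ℕ, Nf r m with hNN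
  set Yf : ℕ → ℕ × ℕ → ℝ≥0∞ := fun r pq =>
    if pq.1 ∈ T ∧ pq.1 % 2 = 1 ∧ pq.2 ∈ T ∧ C ≤ pq.1 + 2*pq.2 ∧ (pq.1 + 2*pq.2) % 3 = r
    then t^(pq.1 + 2*pq.2) else 0 with hYf
  have extract : ∀ r m, m ∈ Function.support (Nf r) → m % 2 = 1 ∧ C ≤ m ∧ m % 3 = r := by
    intro r m hm
    by_cases hc : m % 2 = 1 ∧ C ≤ m ∧ m % 3 = r
    · exact hc
    · exact absurd (by simp [hNf, hc] : Nf r m = 0) hm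
  -- the unique-representation bijection
  have hYN : ∀ r : ℕ, (∑' pq : ℕ × ℕ, Yf r pq) = NN r := by
    intro r
    refine tsum_eq_tsum_of_ne_zero_bij (fun m => g m.1) ?_ ?_ ?_
    · rintro ⟨m1, hm1⟩ ⟨m2, hm2⟩ hg
      obtain ⟨a1, b1, c1⟩ := extract r m1 hm1
      obtain ⟨a2, b2, c2⟩ := extract r m2 hm2
      have e1 := hg3 m1 a1 b1
      have e2 := hg3 m2 a2 b2
      have : g m1 = g m2 := hg
      apply Subtype.ext
      show m1 = m2
      rw [e1, e2, this]
    · rintro ⟨p, q⟩ hpq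
      have hc : p ∈ T ∧ p % 2 = 1 ∧ q ∈ T ∧ C ≤ p + 2*q ∧ (p + 2*q) % 3 = r := by
        by_contra hcc
        exact absurd (by simp [hYf, hcc] : Yf r (p, q) = 0) hpq
      obtain ⟨hp, hop, hq, hC, hr3⟩ := hc
      have hm2 : (p + 2*q) % 2 = 1 := by omega
      have hmem : (p + 2*q) ∈ Function.support (Nf r) := by
        simp only [Function.mem_support, hNf]
        rw [if_pos ⟨hm2, hC, hr3⟩]
        exact pow_ne_zero _ ht0
      refine ⟨⟨p + 2*q, hmem⟩, ?_⟩
      show g (p + 2*q) = (p, q)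
      exact (h (p + 2*q) (Nat.odd_iff.mpr hm2) hC).unique
        ⟨hg1 _ hm2 hC, hg2 _ hm2 hC, hg3 _ hm2 hC⟩ ⟨hp, hq, rfl⟩
    · rintro ⟨m, hm⟩
      obtain ⟨h2, hC, h3⟩ := extract r m hm
      have hgp := hg1 m h2 hC
      have hgq := hg2 m h2 hC
      have hge := hg3 m h2 hC
      have hop : (g m).1 % 2 = 1 := by omega
      show Yf r (g m) = Nf r m
      simp only [hYf, hNf]
      rw [if_pos ⟨hgp, hop, hgq, by omega, by omega⟩, if_pos ⟨h2, hC, h3⟩, ← hge]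
  -- product structure of boxes
  have hbox : ∀ i j : ℕ, (∑' pq : ℕ × ℕ, pf i pq.1 * qf j pq.2) = P i * Q j := by
    intro i j
    rw [ENNReal.tsum_prod']
    calc ∑' (p : ℕ) (q : ℕ), pf i p * qf j q
        = ∑' p : ℕ, pf i p * ∑' q : ℕ, qf j q := by
          congr 1; ext p; exact ENNReal.tsum_mul_left
      _ = P i * Q j := ENNReal.tsum_mul_right
  -- pointwise: covering direction
  have hpt1 : ∀ r, r < 3 → ∀ pq : ℕ × ℕ,
      Yf r pq ≤ pf ((r+0)%3) pq.1 * qf 0 pq.2 + pf ((r+1)%3) pq.1 * qf 1 pq.2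
        + pf ((r+2)%3) pq.1 * qf 2 pq.2 := by
    rintro r hr ⟨p, q⟩
    by_cases hY : p ∈ T ∧ p % 2 = 1 ∧ q ∈ T ∧ C ≤ p + 2*q ∧ (p + 2*q) % 3 = r
    · obtain ⟨hp, hop, hq, hc, hm⟩ := hY
      have hYv : Yf r (p, q) = t^p * t^(2*q) := by
        simp only [hYf]
        rw [if_pos ⟨hp, hop, hq, hc, hm⟩, pow_add]
      rw [hYv]
      have hq3 : q % 3 = 0 ∨ q % 3 = 1 ∨ q % 3 = 2 := by omega
      rcases hq3 with h0 | h1 | h2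
      · have hterm : pf ((r+0)%3) p * qf 0 q = t^p * t^(2*q) := by
          simp only [hpf, hqf]
          rw [if_pos ⟨hp, hop, by omega⟩, if_pos ⟨hq, h0⟩]
        rw [← hterm]
        exact le_add_right (le_add_right le_rfl)
      · have hterm : pf ((r+1)%3) p * qf 1 q = t^p * t^(2*q) := by
          simp only [hpf, hqf]
          rw [if_pos ⟨hp, hop, by omega⟩, if_pos ⟨hq, h1⟩]
        rw [← hterm]
        exact le_add_right le_add_self
      · have hterm : pf ((r+2)%3) p * qf 2 q = t^p * t^(2*q) := by
          simp only [hpf, hqf]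
          rw [if_pos ⟨hp, hop, by omega⟩, if_pos ⟨hq, h2⟩]
        rw [← hterm]
        exact le_add_self
    · have : Yf r (p, q) = 0 := by simp [hYf, hY]
      rw [this]
      exact zero_le
  -- pointwise: uniqueness direction
  have hpt2 : ∀ r, r < 3 → ∀ pq : ℕ × ℕ,
      pf ((r+0)%3) pq.1 * qf 0 pq.2 + pf ((r+1)%3) pq.1 * qf 1 pq.2
        + pf ((r+2)%3) pq.1 * qf 2 pq.2
      ≤ Yf r pq + (if pq.1 < C ∧ pq.2 < C then (1:ℝ≥0∞) else 0) := by
    rintro r hr ⟨p, q⟩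
    by_cases hp : p ∈ T
    case neg =>
      have z : ∀ i, pf i p = 0 := fun i => by simp [hpf, hp]
      simp only [z, zero_mul, add_zero, zero_add]
      exact zero_le
    by_cases hop : p % 2 = 1
    case neg =>
      have z : ∀ i, pf i p = 0 := fun i => by simp [hpf, hop]
      simp only [z, zero_mul, add_zero, zero_add]
      exact zero_le
    by_cases hq : q ∈ T
    case neg =>
      have z : ∀ j, qf j q = 0 := fun j => by simp [hqf, hq]
      simp only [z, mul_zero, add_zero, zero_add]
      exact zero_le
    -- main case
    have hval : ∀ i j : ℕ, pf i p * qf j q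
        = if p % 3 = i ∧ q % 3 = j then t^p * t^(2*q) else 0 := by
      intro i j
      simp only [hpf, hqf]
      by_cases h1 : p % 3 = i <;> by_cases h2 : q % 3 = j <;>
        simp [hp, hop, hq, h1, h2]
    simp only [hval]
    have hbound : t^p * t^(2*q) ≤ Yf r (p, q)
        + (if p < C ∧ q < C then (1:ℝ≥0∞) else 0) → ∀ a b c' : ℝ≥0∞,
        a + b + c' = t^p * t^(2*q) →
        a + b + c' ≤ Yf r (p, q) + (if p < C ∧ q < C then (1:ℝ≥0∞) else 0) := by
      intro hb a b c' habc
      rw [habc]; exact hb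
    have hq3 : q % 3 = 0 ∨ q % 3 = 1 ∨ q % 3 = 2 := by omega
    by_cases hmain : p % 3 = (r + q % 3) % 3
    · -- exactly one matching term
      have hsum : (if p % 3 = (r+0)%3 ∧ q % 3 = 0 then t^p * t^(2*q) else 0)
          + (if p % 3 = (r+1)%3 ∧ q % 3 = 1 then t^p * t^(2*q) else 0)
          + (if p % 3 = (r+2)%3 ∧ q % 3 = 2 then t^p * t^(2*q) else 0)
          = t^p * t^(2*q) := by
        rcases hq3 with h0 | h1 | h2
        · rw [if_pos ⟨by omega, h0⟩, if_neg (by omega), if_neg (by omega)]; ring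
        · rw [if_neg (by omega), if_pos ⟨by omega, h1⟩, if_neg (by omega)]; ring
        · rw [if_neg (by omega), if_neg (by omega), if_pos ⟨by omega, h2⟩]; ring
      rw [hsum]
      by_cases hC : C ≤ p + 2*q
      · have : Yf r (p, q) = t^(p + 2*q) := by
          simp only [hYf]
          rw [if_pos ⟨hp, hop, hq, hC, by omega⟩]
        rw [this, ← pow_add]
        exact le_add_right le_rfl
      · have hJ1 : (if p < C ∧ q < C then (1:ℝ≥0∞) else 0) = 1 :=
          if_pos (by omega)
        rw [hJ1]
        calc t^p * t^(2*q) ≤ 1 * 1 := by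
              gcongr <;> exact pow_le_one₀ (zero_le) ht1
          _ = 1 := one_mul 1
          _ ≤ Yf r (p, q) + 1 := le_add_self
    · -- no matching term: all three are zero
      have hz : (if p % 3 = (r+0)%3 ∧ q % 3 = 0 then t^p * t^(2*q) else 0)
          + (if p % 3 = (r+1)%3 ∧ q % 3 = 1 then t^p * t^(2*q) else 0)
          + (if p % 3 = (r+2)%3 ∧ q % 3 = 2 then t^p * t^(2*q) else 0) = 0 := by
        rw [if_neg (by omega), if_neg (by omega), if_neg (by omega)]; ring
      rw [hz]
      exact zero_le
  -- covering inequality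
  have hcov : ∀ r, r < 3 →
      NN r ≤ P ((r+0)%3) * Q 0 + P ((r+1)%3) * Q 1 + P ((r+2)%3) * Q 2 := by
    intro r hr
    rw [← hYN r]
    calc (∑' pq : ℕ × ℕ, Yf r pq)
        ≤ ∑' pq : ℕ × ℕ, (pf ((r+0)%3) pq.1 * qf 0 pq.2
            + pf ((r+1)%3) pq.1 * qf 1 pq.2 + pf ((r+2)%3) pq.1 * qf 2 pq.2) :=
          ENNReal.tsum_le_tsum (hpt1 r hr)
      _ = P ((r+0)%3) * Q 0 + P ((r+1)%3) * Q 1 + P ((r+2)%3) * Q 2 := by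
          rw [ENNReal.tsum_add, ENNReal.tsum_add, hbox, hbox, hbox]
  -- junk bound
  have hJle : (∑' pq : ℕ × ℕ, if pq.1 < C ∧ pq.2 < C then (1:ℝ≥0∞) else 0)
      ≤ (K:ℝ≥0∞) := by
    have hsplit : ∀ p q : ℕ, (if p < C ∧ q < C then (1:ℝ≥0∞) else 0)
        = (if p < C then (1:ℝ≥0∞) else 0) * (if q < C then (1:ℝ≥0∞) else 0) := by
      intro p q
      by_cases h1 : p < C <;> by_cases h2 : q < C <;> simp [h1, h2]
    calc (∑' pq : ℕ × ℕ, if pq.1 < C ∧ pq.2 < C then (1:ℝ≥0∞) else 0)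
        = ∑' (p : ℕ) (q : ℕ), (if p < C then (1:ℝ≥0∞) else 0)
            * (if q < C then (1:ℝ≥0∞) else 0) := by
          rw [ENNReal.tsum_prod']
          congr 1; ext p; congr 1; ext q; exact hsplit p q
      _ = (∑' p : ℕ, if p < C then (1:ℝ≥0∞) else 0)
            * (∑' q : ℕ, if q < C then (1:ℝ≥0∞) else 0) := by
          calc ∑' (p : ℕ) (q : ℕ), (if p < C then (1:ℝ≥0∞) else 0)
              * (if q < C then (1:ℝ≥0∞) else 0)
              = ∑' p : ℕ, (if p < C then (1:ℝ≥0∞) else 0)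
                * (∑' q : ℕ, if q < C then (1:ℝ≥0∞) else 0) := by
                congr 1; ext p; exact ENNReal.tsum_mul_left
            _ = _ := ENNReal.tsum_mul_right
      _ = (C:ℝ≥0∞) * C := by rw [count_lt]
      _ = ((C*C : ℕ) : ℝ≥0∞) := by push_cast; ring
      _ ≤ (K:ℝ≥0∞) := by
          have : C * C ≤ K := by rw [hKdef, pow_two]; omega
          exact_mod_cast this
  -- uniqueness inequality
  have hup : ∀ r, r < 3 →
      P ((r+0)%3) * Q 0 + P ((r+1)%3) * Q 1 + P ((r+2)%3) * Q 2
        ≤ NN r + (K:ℝ≥0∞) := by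
    intro r hr
    calc P ((r+0)%3) * Q 0 + P ((r+1)%3) * Q 1 + P ((r+2)%3) * Q 2
        = ∑' pq : ℕ × ℕ, (pf ((r+0)%3) pq.1 * qf 0 pq.2
            + pf ((r+1)%3) pq.1 * qf 1 pq.2 + pf ((r+2)%3) pq.1 * qf 2 pq.2) := by
          rw [ENNReal.tsum_add, ENNReal.tsum_add, hbox, hbox, hbox]
      _ ≤ ∑' pq : ℕ × ℕ, (Yf r pq + (if pq.1 < C ∧ pq.2 < C then (1:ℝ≥0∞) else 0)) :=
          ENNReal.tsum_le_tsum (hpt2 r hr)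
      _ = (∑' pq : ℕ × ℕ, Yf r pq)
            + (∑' pq : ℕ × ℕ, if pq.1 < C ∧ pq.2 < C then (1:ℝ≥0∞) else 0) :=
          ENNReal.tsum_add
      _ ≤ NN r + (K:ℝ≥0∞) := by rw [hYN r]; exact add_le_add_right hJle _
  -- upper bound for NN r
  have hNle : ∀ r ρ : ℕ, ρ < 6 → (∀ m, m % 2 = 1 → m % 3 = r → m % 6 = ρ) →
      NN r ≤ X := by
    intro r ρ hρ himp
    calc NN r ≤ ∑' m : ℕ, (if m % 6 = ρ then t^m else 0) := by
          refine ENNReal.tsum_le_tsum (fun m => ?_)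
          simp only [hNf]
          by_cases h1 : m % 2 = 1 ∧ C ≤ m ∧ m % 3 = r
          · rw [if_pos h1, if_pos (himp m h1.1 h1.2.2)]
          · rw [if_neg h1]; exact zero_le
      _ = t^ρ * X := by rw [tsum_mod t ht0 ρ hρ, hXdef]
      _ ≤ 1 * X := mul_le_mul_left (pow_le_one₀ (zero_le) ht1) X
      _ = X := one_mul X
  -- lower bound for NN r
  have hNge : ∀ r c : ℕ, C ≤ c → c ≤ C + 12 → c % 2 = 1 → c % 3 = r →
      t^(C+12) * X ≤ NN r := by
    intro r c h1 h2 h3 h4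
    have hinj : Function.Injective (fun k : ℕ => c + 6*k) := by
      intro a b hab
      simp only at hab
      omega
    calc t^(C+12) * X ≤ t^c * X :=
          mul_le_mul_left (pow_le_pow_of_le_one (zero_le) ht1 h2) X
      _ = ∑' k : ℕ, t^(c + 6*k) := by rw [hXdef, tsum_shift]
      _ = ∑' k : ℕ, Nf r (c + 6*k) := by
          congr 1; ext k
          simp only [hNf]
          rw [if_pos ⟨by omega, by omega, by omega⟩]
      _ ≤ NN r := ENNReal.tsum_comp_le_tsum_of_injective hinj (Nf r)
  -- class 0 is only the prime 3
  have hprime3 : ∀ p ∈ T, p % 3 = 0 → p = 3 := by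
    intro p hp h0
    exact ((Nat.prime_dvd_prime_iff_eq Nat.prime_three (hT p hp)).mp
      (Nat.dvd_of_mod_eq_zero h0)).symm
  have hP0 : P 0 ≤ 1 := by
    show (∑' p : ℕ, pf 0 p) ≤ 1
    calc (∑' p : ℕ, pf 0 p) ≤ ∑' p : ℕ, (if p = 3 then (1:ℝ≥0∞) else 0) := by
          refine ENNReal.tsum_le_tsum (fun p => ?_)
          simp only [hpf]
          by_cases h1 : p ∈ T ∧ p % 2 = 1 ∧ p % 3 = 0
          · rw [if_pos h1, if_pos (hprime3 p h1.1 h1.2.2)]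
            exact pow_le_one₀ (zero_le) ht1
          · rw [if_neg h1]; exact zero_le
      _ = 1 := tsum_ite_eq 3 1
  have hQ0 : Q 0 ≤ 1 := by
    show (∑' q : ℕ, qf 0 q) ≤ 1
    calc (∑' q : ℕ, qf 0 q) ≤ ∑' q : ℕ, (if q = 3 then (1:ℝ≥0∞) else 0) := by
          refine ENNReal.tsum_le_tsum (fun q => ?_)
          simp only [hqf]
          by_cases h1 : q ∈ T ∧ q % 3 = 0
          · rw [if_pos h1, if_pos (hprime3 q h1.1 h1.2)]
            exact pow_le_one₀ (zero_le) ht1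
          · rw [if_neg h1]; exact zero_le
      _ = 1 := tsum_ite_eq 3 1
  -- the set T is infinite: lower bounds for the main generating functions
  have hFmem : ∀ x ∈ F, x ∈ T ∧ x ≠ 2 ∧ x ≠ 3 := by
    intro x hx
    have := hFT hx
    simp only [Set.mem_diff, Set.mem_insert_iff, Set.mem_singleton_iff] at this
    exact ⟨this.1, fun h2 => this.2 (Or.inl h2), fun h3 => this.2 (Or.inr h3)⟩
  have hFB : ∀ x ∈ F, x ≤ B := fun x hx => Finset.le_sup (f := id) hx
  have hH1 : (1000:ℝ≥0∞) ≤ P 1 + P 2 := by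
    have hptw : ∀ p ∈ F, t^B ≤ pf 1 p + pf 2 p := by
      intro p hp
      obtain ⟨hpT, hp2, hp3⟩ := hFmem p hp
      have hprime := hT p hpT
      have hodd : p % 2 = 1 := Nat.odd_iff.mp (hprime.odd_of_ne_two hp2)
      have h3 : p % 3 = 1 ∨ p % 3 = 2 := by
        have : p % 3 ≠ 0 := fun h0 => hp3 (hprime3 p hpT h0)
        omega
      have hpB : t^B ≤ t^p := pow_le_pow_of_le_one (zero_le) ht1 (hFB p hp)
      rcases h3 with h | h
      · calc t^B ≤ t^p := hpB
          _ ≤ pf 1 p + pf 2 p := by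
            simp only [hpf]
            rw [if_pos ⟨hpT, hodd, h⟩]
            exact le_add_right le_rfl
      · calc t^B ≤ t^p := hpB
          _ ≤ pf 1 p + pf 2 p := by
            simp only [hpf]
            rw [if_pos (c := p ∈ T ∧ p % 2 = 1 ∧ p % 3 = 2) ⟨hpT, hodd, h⟩]
            exact le_add_self
    calc (1000:ℝ≥0∞) = 1000 * 1 := (mul_one _).symm
      _ ≤ 1000 * (2 * t^B) := by gcongr; exact hmul B (by omega)
      _ = F.card • t^B := by rw [hFcard, nsmul_eq_mul]; push_cast; ring
      _ ≤ ∑ p ∈ F, (pf 1 p + pf 2 p) := Finset.card_nsmul_le_sum F _ _ hptw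
      _ ≤ ∑' p : ℕ, (pf 1 p + pf 2 p) := ENNReal.sum_le_tsum F
      _ = P 1 + P 2 := ENNReal.tsum_add
  have hH2 : (1000:ℝ≥0∞) ≤ Q 1 + Q 2 := by
    have hptw : ∀ q ∈ F, t^(2*B) ≤ qf 1 q + qf 2 q := by
      intro q hq
      obtain ⟨hqT, hq2, hq3⟩ := hFmem q hq
      have hprime := hT q hqT
      have h3 : q % 3 = 1 ∨ q % 3 = 2 := by
        have : q % 3 ≠ 0 := fun h0 => hq3 (hprime3 q hqT h0)
        omega
      have hqB : t^(2*B) ≤ t^(2*q) :=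
        pow_le_pow_of_le_one (zero_le) ht1 (by have := hFB q hq; omega)
      rcases h3 with h | h
      · calc t^(2*B) ≤ t^(2*q) := hqB
          _ ≤ qf 1 q + qf 2 q := by
            simp only [hqf]
            rw [if_pos ⟨hqT, h⟩]
            exact le_add_right le_rfl
      · calc t^(2*B) ≤ t^(2*q) := hqB
          _ ≤ qf 1 q + qf 2 q := by
            simp only [hqf]
            rw [if_pos (c := q ∈ T ∧ q % 3 = 2) ⟨hqT, h⟩]
            exact le_add_self
    calc (1000:ℝ≥0∞) = 1000 * 1 := (mul_one _).symm
      _ ≤ 1000 * (2 * t^(2*B)) := by gcongr; exact hmul (2*B) (by omega)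
      _ = F.card • t^(2*B) := by rw [hFcard, nsmul_eq_mul]; push_cast; ring
      _ ≤ ∑ q ∈ F, (qf 1 q + qf 2 q) := Finset.card_nsmul_le_sum F _ _ hptw
      _ ≤ ∑' q : ℕ, (qf 1 q + qf 2 q) := ENNReal.sum_le_tsum F
      _ = Q 1 + Q 2 := ENNReal.tsum_add
  -- instantiate the three residue classes
  have h0u : P 0 * Q 0 + P 1 * Q 1 + P 2 * Q 2 ≤ NN 0 + (K:ℝ≥0∞) := by
    have := hup 0 (by norm_num); norm_num at this; exact this
  have h1u : P 1 * Q 0 + P 2 * Q 1 + P 0 * Q 2 ≤ NN 1 + (K:ℝ≥0∞) := by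
    have := hup 1 (by norm_num); norm_num at this; exact this
  have h2u : P 2 * Q 0 + P 0 * Q 1 + P 1 * Q 2 ≤ NN 2 + (K:ℝ≥0∞) := by
    have := hup 2 (by norm_num); norm_num at this; exact this
  have h1c : NN 1 ≤ P 1 * Q 0 + P 2 * Q 1 + P 0 * Q 2 := by
    have := hcov 1 (by norm_num); norm_num at this; exact this
  have h2c : NN 2 ≤ P 2 * Q 0 + P 0 * Q 1 + P 1 * Q 2 := by
    have := hcov 2 (by norm_num); norm_num at this; exact this
  have hN0le : NN 0 ≤ X := hNle 0 3 (by norm_num) (fun m h1 h2 => by omega)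
  have hN1le : NN 1 ≤ X := hNle 1 1 (by norm_num) (fun m h1 h2 => by omega)
  have hN2le : NN 2 ≤ X := hNle 2 5 (by norm_num) (fun m h1 h2 => by omega)
  have hN1ge : t^(C+12) * X ≤ NN 1 :=
    hNge 1 (6*(C/6+1)+1) (by omega) (by omega) (by omega) (by omega)
  have hN2ge : t^(C+12) * X ≤ NN 2 :=
    hNge 2 (6*(C/6+1)+5) (by omega) (by omega) (by omega) (by omega)
  have hfull : (P 1 + P 2) * (Q 1 + Q 2) ≤ 3 * (X + (K:ℝ≥0∞)) := by
    calc (P 1 + P 2) * (Q 1 + Q 2)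
        ≤ (P 0 + P 1 + P 2) * (Q 0 + Q 1 + Q 2) :=
          mul_le_mul' (add_le_add_left le_add_self _) (add_le_add_left le_add_self _)
      _ = (P 0 * Q 0 + P 1 * Q 1 + P 2 * Q 2) + (P 1 * Q 0 + P 2 * Q 1 + P 0 * Q 2)
            + (P 2 * Q 0 + P 0 * Q 1 + P 1 * Q 2) := by ring
      _ ≤ (NN 0 + (K:ℝ≥0∞)) + (NN 1 + (K:ℝ≥0∞)) + (NN 2 + (K:ℝ≥0∞)) :=
          add_le_add (add_le_add h0u h1u) h2u
      _ ≤ (X + (K:ℝ≥0∞)) + (X + (K:ℝ≥0∞)) + (X + (K:ℝ≥0∞)) := by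
          exact add_le_add (add_le_add (add_le_add_left hN0le _)
            (add_le_add_left hN1le _)) (add_le_add_left hN2le _)
      _ = 3 * (X + (K:ℝ≥0∞)) := by ring
  have hN1v : NN 1 ≤ P 2 * Q 1 + ((P 1 + P 2) + (Q 1 + Q 2)) := by
    calc NN 1 ≤ P 1 * Q 0 + P 2 * Q 1 + P 0 * Q 2 := h1c
      _ ≤ P 1 * 1 + P 2 * Q 1 + 1 * Q 2 := by
          exact add_le_add (add_le_add (mul_le_mul_right hQ0 _) le_rfl)
            (mul_le_mul_left hP0 _)
      _ = P 2 * Q 1 + (P 1 + Q 2) := by ring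
      _ ≤ P 2 * Q 1 + ((P 1 + P 2) + (Q 1 + Q 2)) := by
          exact add_le_add_right (add_le_add (le_add_right le_rfl) le_add_self) _
  have hN2v : NN 2 ≤ P 1 * Q 2 + ((P 1 + P 2) + (Q 1 + Q 2)) := by
    calc NN 2 ≤ P 2 * Q 0 + P 0 * Q 1 + P 1 * Q 2 := h2c
      _ ≤ P 2 * 1 + 1 * Q 1 + P 1 * Q 2 := by
          exact add_le_add (add_le_add (mul_le_mul_right hQ0 _)
            (mul_le_mul_left hP0 _)) le_rfl
      _ = P 1 * Q 2 + (P 2 + Q 1) := by ring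
      _ ≤ P 1 * Q 2 + ((P 1 + P 2) + (Q 1 + Q 2)) := by
          exact add_le_add_right (add_le_add le_add_self (le_add_right le_rfl)) _
  have hN0v : P 1 * Q 1 + P 2 * Q 2 ≤ X + (K:ℝ≥0∞) := by
    calc P 1 * Q 1 + P 2 * Q 2 ≤ (P 0 * Q 0 + P 1 * Q 1) + P 2 * Q 2 :=
          add_le_add_left le_add_self _
      _ ≤ NN 0 + (K:ℝ≥0∞) := h0u
      _ ≤ X + (K:ℝ≥0∞) := add_le_add_left hN0le _
  have hEb : 1000 * ((P 1 + P 2) + (Q 1 + Q 2)) ≤ 6 * (X + (K:ℝ≥0∞)) := by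
    have e1 : (1000:ℝ≥0∞) * (P 1 + P 2) ≤ 3 * (X + (K:ℝ≥0∞)) := by
      calc (1000:ℝ≥0∞) * (P 1 + P 2) ≤ (Q 1 + Q 2) * (P 1 + P 2) :=
            mul_le_mul_left hH2 _
        _ = (P 1 + P 2) * (Q 1 + Q 2) := mul_comm _ _
        _ ≤ 3 * (X + (K:ℝ≥0∞)) := hfull
    have e2 : (1000:ℝ≥0∞) * (Q 1 + Q 2) ≤ 3 * (X + (K:ℝ≥0∞)) := by
      calc (1000:ℝ≥0∞) * (Q 1 + Q 2) ≤ (P 1 + P 2) * (Q 1 + Q 2) :=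
            mul_le_mul_left hH1 _
        _ ≤ 3 * (X + (K:ℝ≥0∞)) := hfull
    calc (1000:ℝ≥0∞) * ((P 1 + P 2) + (Q 1 + Q 2))
        = 1000 * (P 1 + P 2) + 1000 * (Q 1 + Q 2) := by ring
      _ ≤ 3 * (X + (K:ℝ≥0∞)) + 3 * (X + (K:ℝ≥0∞)) := add_le_add e1 e2
      _ = 6 * (X + (K:ℝ≥0∞)) := by ring
  have hAM : 4 * ((P 2 * Q 1) * (P 1 * Q 2)) ≤ (X + (K:ℝ≥0∞))^2 := by
    calc 4 * ((P 2 * Q 1) * (P 1 * Q 2)) = 4 * ((P 1 * Q 1) * (P 2 * Q 2)) := by ring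
      _ ≤ ((P 1 * Q 1) + (P 2 * Q 2))^2 := four_mul_le_sq _ _
      _ ≤ (X + (K:ℝ≥0∞))^2 := pow_le_pow_left₀ (zero_le) hN0v 2
  have hcross : P 2 * Q 1 + P 1 * Q 2 ≤ 3 * (X + (K:ℝ≥0∞)) := by
    calc P 2 * Q 1 + P 1 * Q 2
        ≤ P 2 * Q 1 + P 1 * Q 2 + (P 1 * Q 1 + P 2 * Q 2) := le_add_right le_rfl
      _ = (P 1 + P 2) * (Q 1 + Q 2) := by ring
      _ ≤ 3 * (X + (K:ℝ≥0∞)) := hfull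
  have h34 : (3:ℝ≥0∞) ≤ 4 * t^(2*C+24) := hmul4 (2*C+24) (by omega)
  have hsq : t^(2*C+24) = t^(C+12) * t^(C+12) := by
    rw [← pow_add]; congr 1; omega
  have hkey : 3 * X^2
      ≤ (X + (K:ℝ≥0∞))^2 + 12 * ((P 1 + P 2) + (Q 1 + Q 2)) * (X + (K:ℝ≥0∞))
        + 4 * ((P 1 + P 2) + (Q 1 + Q 2))^2 := by
    calc 3 * X^2 ≤ (4 * t^(2*C+24)) * X^2 := mul_le_mul_left h34 _
      _ = 4 * ((t^(C+12) * X) * (t^(C+12) * X)) := by rw [hsq]; ring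
      _ ≤ 4 * (NN 1 * NN 2) := mul_le_mul_right (mul_le_mul' hN1ge hN2ge) 4
      _ ≤ 4 * ((P 2 * Q 1 + ((P 1 + P 2) + (Q 1 + Q 2)))
            * (P 1 * Q 2 + ((P 1 + P 2) + (Q 1 + Q 2)))) :=
          mul_le_mul_right (mul_le_mul' hN1v hN2v) 4
      _ = 4 * ((P 2 * Q 1) * (P 1 * Q 2))
            + 4 * ((P 1 + P 2) + (Q 1 + Q 2)) * (P 2 * Q 1 + P 1 * Q 2)
            + 4 * ((P 1 + P 2) + (Q 1 + Q 2))^2 := by ring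
      _ ≤ (X + (K:ℝ≥0∞))^2
            + 4 * ((P 1 + P 2) + (Q 1 + Q 2)) * (3 * (X + (K:ℝ≥0∞)))
            + 4 * ((P 1 + P 2) + (Q 1 + Q 2))^2 :=
          add_le_add (add_le_add hAM (mul_le_mul_right hcross _)) le_rfl
      _ = (X + (K:ℝ≥0∞))^2 + 12 * ((P 1 + P 2) + (Q 1 + Q 2)) * (X + (K:ℝ≥0∞))
            + 4 * ((P 1 + P 2) + (Q 1 + Q 2))^2 := by ring
  have hax : (1000:ℝ≥0∞) * (X + (K:ℝ≥0∞)) ≤ 1001 * X := by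
    have hMX : (1000:ℝ≥0∞) * (K:ℝ≥0∞) ≤ X := by
      have hcast : ((M:ℕ):ℝ≥0∞) = 1000 * (K:ℝ≥0∞) := by rw [hMdef]; push_cast; ring
      rw [← hcast]; exact hXM
    calc (1000:ℝ≥0∞) * (X + (K:ℝ≥0∞)) = 1000 * X + 1000 * (K:ℝ≥0∞) := by ring
      _ ≤ 1000 * X + X := add_le_add_right hMX _
      _ = 1001 * X := by ring
  have hEx : (1000000:ℝ≥0∞) * ((P 1 + P 2) + (Q 1 + Q 2)) ≤ 6006 * X := by
    calc (1000000:ℝ≥0∞) * ((P 1 + P 2) + (Q 1 + Q 2))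
        = 1000 * (1000 * ((P 1 + P 2) + (Q 1 + Q 2))) := by ring
      _ ≤ 1000 * (6 * (X + (K:ℝ≥0∞))) := mul_le_mul_right hEb _
      _ = 6 * (1000 * (X + (K:ℝ≥0∞))) := by ring
      _ ≤ 6 * (1001 * X) := mul_le_mul_right hax _
      _ = 6006 * X := by ring
  have hbig : (3000000000000:ℝ≥0∞) * X^2 ≤ 1074289360144 * X^2 := by
    calc (3000000000000:ℝ≥0∞) * X^2 = 1000000000000 * (3 * X^2) := by ring
      _ ≤ 1000000000000 * ((X + (K:ℝ≥0∞))^2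
            + 12 * ((P 1 + P 2) + (Q 1 + Q 2)) * (X + (K:ℝ≥0∞))
            + 4 * ((P 1 + P 2) + (Q 1 + Q 2))^2) := mul_le_mul_right hkey _
      _ = 1000000 * ((1000 * (X + (K:ℝ≥0∞)))^2)
            + 12000 * ((1000000 * ((P 1 + P 2) + (Q 1 + Q 2)))
              * (1000 * (X + (K:ℝ≥0∞))))
            + 4 * ((1000000 * ((P 1 + P 2) + (Q 1 + Q 2)))^2) := by ring
      _ ≤ 1000000 * ((1001 * X)^2) + 12000 * ((6006 * X) * (1001 * X))
            + 4 * ((6006 * X)^2) :=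
          add_le_add (add_le_add (mul_le_mul_right (pow_le_pow_left₀ (zero_le) hax 2) _)
            (mul_le_mul_right (mul_le_mul' hEx hax) _))
            (mul_le_mul_right (pow_le_pow_left₀ (zero_le) hEx 2) _)
      _ = 1074289360144 * X^2 := by ring
  have hX2ne : X^2 ≠ 0 := pow_ne_zero _ hX0
  have hX2top : X^2 ≠ ⊤ := ENNReal.pow_ne_top hXtop
  have hcontr := (ENNReal.mul_le_mul_iff_left hX2ne hX2top).mp hbig
  have hnat : (3000000000000:ℕ) ≤ (1074289360144:ℕ) := by exact_mod_cast hcontr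
  omega


theorem main (T : Set ℕ) (hT : ∀ p ∈ T, Nat.Prime p) (C : ℕ)
    (h : ∀ m : ℕ, Odd m → C ≤ m →
      ∃! pq : ℕ × ℕ, pq.1 ∈ T ∧ pq.2 ∈ T ∧ m = pq.1 + 2 * pq.2) : False := by
  classical
  rcases Set.finite_or_infinite (T \ {2, 3}) with hfin | hinf
  · have hTf : T.Finite := by
      have hsub : T ⊆ (T \ {2, 3}) ∪ {2, 3} := by
        intro x hx
        by_cases hx2 : x ∈ ({2, 3} : Set ℕ)
        · exact Or.inr hx2
        · exact Or.inl ⟨hx, hx2⟩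
      exact (hfin.union (Set.toFinite {2,3})).subset hsub
    set F := hTf.toFinset with hF
    set s := F.sup id with hs
    have hmem : ∀ p ∈ T, p ≤ s := by
      intro p hp
      exact Finset.le_sup (f := id) (hTf.mem_toFinset.mpr hp)
    obtain ⟨⟨p, q⟩, ⟨hp, hq, heq⟩, -⟩ :=
      h (2 * (C + 2 * s) + 1) ⟨C + 2 * s, by ring⟩ (by omega)
    have h1 := hmem p hp
    have h2 := hmem q hq
    simp only at heq
    omega
  · exact infinite_case T hT C h hinf

end NoUniqueRep

/-- There is no set `T` of primes and constant `C` such that every odd `m ≥ C` has exactly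
one representation `m = p + 2q` with `p, q ∈ T`. -/
theorem no_unique_prime_representation (T : Set ℕ) (hT : ∀ p ∈ T, Nat.Prime p) (C : ℕ) :
    ∃ m : ℕ, Odd m ∧ C ≤ m ∧
      ¬ (∃! pq : ℕ × ℕ, pq.1 ∈ T ∧ pq.2 ∈ T ∧ m = pq.1 + 2 * pq.2) := by
  by_contra hcon
  push_neg at hcon
  exact NoUniqueRep.main T hT C fun m hm hC => (hcon m hm hC)
end

section
/- Let r ≥ 2 be an integer. Every integer N with N ≡ 1 (mod r) and N ≥ r + 1 can be represented in exactly one way as a sum N = s^{(r)}_k + r·s^{(r)}_l with integers k, l ≥ 1. -/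
lemma moser_rec (r : ℕ) (hr : 2 ≤ r) (n : ℕ) :
    moser r n = n % r + r ^ 2 * moser r (n / r) := by
  rcases Nat.eq_zero_or_pos n with h | h
  · simp [moser, h]
  · unfold moser
    rw [Nat.digits_def' (by omega : 1 < r) h, Nat.ofDigits_cons]

lemma le_moser (r : ℕ) (hr : 2 ≤ r) (n : ℕ) : n ≤ moser r n := by
  induction n using Nat.strong_induction_on with
  | _ n ih =>
    rcases Nat.eq_zero_or_pos n with h | h
    · simp [h]
    · rw [moser_rec r hr n]
      have h1 : n / r < n := Nat.div_lt_self h (by omega)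
      have h2 := ih (n / r) h1
      have h3 := Nat.div_add_mod n r
      have h4 : r ^ 2 * moser r (n / r) = r * (r * moser r (n / r)) := by ring
      have h5 : r * (n / r) ≤ r * moser r (n / r) := Nat.mul_le_mul_left r h2
      have h6 : r * moser r (n / r) ≤ r * (r * moser r (n / r)) :=
        Nat.le_mul_of_pos_left _ (by omega)
      omega

lemma F_rec (r : ℕ) (hr : 2 ≤ r) (a b : ℕ) :
    moser r a + r * moser r b = a % r + r * (moser r b + r * moser r (a / r)) := by
  rw [moser_rec r hr a]
  ring

lemma divmod_uniq (r s q M : ℕ) (h : M = s + r * q) (hs : s < r) :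
    s = M % r ∧ q = M / r := by
  subst h
  constructor
  · rw [Nat.add_mul_mod_self_left, Nat.mod_eq_of_lt hs]
  · rw [Nat.add_mul_div_left _ _ (by omega : 0 < r), Nat.div_eq_of_lt hs, Nat.zero_add]

lemma F_inj (r : ℕ) (hr : 2 ≤ r) :
    ∀ M a b a' b', moser r a + r * moser r b = M →
      moser r a' + r * moser r b' = M → a = a' ∧ b = b' := by
  intro M
  induction M using Nat.strong_induction_on with
  | _ M ih =>
    intro a b a' b' h h'
    rcases Nat.eq_zero_or_pos M with h0 | h0
    · have hmb : moser r b = 0 := by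
        have h5 : r * moser r b = 0 := by omega
        exact (Nat.mul_eq_zero.mp h5).resolve_left (by omega)
      have hmb' : moser r b' = 0 := by
        have h5 : r * moser r b' = 0 := by omega
        exact (Nat.mul_eq_zero.mp h5).resolve_left (by omega)
      have := le_moser r hr a
      have := le_moser r hr b
      have := le_moser r hr a'
      have := le_moser r hr b'
      omega
    · rw [F_rec r hr] at h h'
      have hm : a % r < r := Nat.mod_lt _ (by omega)
      have hm' : a' % r < r := Nat.mod_lt _ (by omega)
      obtain ⟨e1, e2⟩ := divmod_uniq r _ _ M h.symm hm
      obtain ⟨e1', e2'⟩ := divmod_uniq r _ _ M h'.symm hm'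
      have hlt : M / r < M := Nat.div_lt_self h0 (by omega)
      obtain ⟨hb, hd⟩ := ih (M / r) hlt b (a / r) b' (a' / r) e2 e2'
      refine ⟨?_, hb⟩
      have d1 := Nat.div_add_mod a r
      have d2 := Nat.div_add_mod a' r
      have d3 : r * (a / r) = r * (a' / r) := by rw [hd]
      omega

lemma F_surj (r : ℕ) (hr : 2 ≤ r) :
    ∀ M, ∃ a b, moser r a + r * moser r b = M := by
  intro M
  induction M using Nat.strong_induction_on with
  | _ M ih =>
    rcases Nat.eq_zero_or_pos M with h0 | h0
    · exact ⟨0, 0, by simp [moser, h0]⟩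
    · have hlt : M / r < M := Nat.div_lt_self h0 (by omega)
      obtain ⟨b, c, hbc⟩ := ih (M / r) hlt
      refine ⟨M % r + r * c, b, ?_⟩
      rw [F_rec r hr]
      have h1 : (M % r + r * c) % r = M % r := by
        rw [Nat.add_mul_mod_self_left]
        exact Nat.mod_mod_of_dvd M dvd_rfl
      have h2 : (M % r + r * c) / r = c := by
        rw [Nat.add_mul_div_left _ _ (by omega : 0 < r),
          Nat.div_eq_of_lt (Nat.mod_lt _ (by omega)), Nat.zero_add]
      rw [h1, h2, hbc]
      exact Nat.mod_add_div M r

/-- For `r ≥ 2`, every `N ≡ 1 (mod r)` with `N ≥ r + 1` has a unique representation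
`N = s^(r)_k + r·s^(r)_l` with `k, l ≥ 1`. -/
theorem moserS_unique_representation (r : ℕ) (hr : 2 ≤ r) (N : ℕ)
    (hN1 : N % r = 1) (hNr : r + 1 ≤ N) :
    ∃! kl : ℕ × ℕ, 1 ≤ kl.1 ∧ 1 ≤ kl.2 ∧ N = moserS r kl.1 + r * moserS r kl.2 := by
  -- write N = r * Q + 1 with Q ≥ 1, set M = Q - 1
  obtain ⟨Q, hQ⟩ : ∃ Q, N = r * Q + 1 := ⟨N / r, by have := Nat.div_add_mod N r; omega⟩
  have hQ1 : 1 ≤ Q := by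
    rcases Nat.eq_zero_or_pos Q with h | h
    · have : r * Q = 0 := by rw [h, Nat.mul_zero]
      omega
    · exact h
  obtain ⟨a, b, hab⟩ := F_surj r hr (Q - 1)
  refine ⟨(a + 1, b + 1), ⟨by simp, by simp, ?_⟩, ?_⟩
  · simp only [moserS, Nat.add_sub_cancel]
    have expand : r * moser r a + 1 + r * (r * moser r b + 1)
        = r * (moser r a + r * moser r b) + 1 + r := by ring
    rw [expand, hab]
    have h7 : r * (Q - 1) + r = r * Q := by
      rw [← Nat.mul_succ, Nat.succ_eq_add_one, Nat.sub_add_cancel hQ1]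
    omega
  · rintro ⟨k, l⟩ ⟨hk, hl, hkl⟩
    simp only [moserS] at hkl
    have key : moser r (k - 1) + r * moser r (l - 1) = Q - 1 := by
      have hN2 : N = r * (moser r (k - 1) + r * moser r (l - 1)) + 1 + r := by
        rw [hkl]; ring
      have h8 : r * (moser r (k - 1) + r * moser r (l - 1) + 1) = r * Q := by
        rw [Nat.mul_add, Nat.mul_one]; omega
      have h9 := Nat.eq_of_mul_eq_mul_left (by omega : 0 < r) h8
      omega
    obtain ⟨e1, e2⟩ := F_inj r hr (Q - 1) (k - 1) (l - 1) a b key hab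
    simp only [Prod.mk.injEq]
    omega
end

section
/- Let r ≥ 2 be an integer, let N ≡ 1 (mod r) with N ≥ r + 1, and let N − r = Σ_{j≥0} c_j r^j be the base-r expansion of N − r (digits 0 ≤ c_j ≤ r−1). Then the indices k = 1 + Σ_{i≥0} c_{2i+1} r^i and l = 1 + Σ_{i≥0} c_{2i+2} r^i satisfy N = s^{(r)}_k + r·s^{(r)}_l (and this is the unique such representation). -/
/-- Fueled extraction of even-position base-`r` digits. -/
def Ef (r : ℕ) : ℕ → ℕ → ℕ
  | 0, _ => 0
  | T + 1, M => M % r + r * Ef r T (M / r ^ 2)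

lemma moser_zero (r : ℕ) : moser r 0 = 0 := by simp [moser]

lemma dig_zero (r : ℕ) (hr : 2 ≤ r) (n : ℕ) : dig r n 0 = n % r := by
  rcases Nat.eq_zero_or_pos n with h | h
  · subst h; simp [dig]
  · rw [dig, Nat.digits_def' hr h]; rfl

lemma dig_succ (r : ℕ) (hr : 2 ≤ r) (n i : ℕ) : dig r n (i + 1) = dig r (n / r) i := by
  rcases Nat.eq_zero_or_pos n with h | h
  · subst h; simp [dig]
  · rw [dig, Nat.digits_def' hr h]; rfl

lemma Ef_sum (r : ℕ) (hr : 2 ≤ r) :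
    ∀ T M, Ef r T M = ∑ i ∈ Finset.range T, dig r M (2 * i) * r ^ i := by
  intro T
  induction T with
  | zero => intro M; simp [Ef]
  | succ T ih =>
    intro M
    rw [Finset.sum_range_succ']
    have h0 : dig r M (2 * 0) * r ^ 0 = M % r := by
      simp [dig_zero r hr]
    rw [h0]
    have h1 : ∀ i, dig r M (2 * (i + 1)) * r ^ (i + 1)
        = r * (dig r (M / r ^ 2) (2 * i) * r ^ i) := by
      intro i
      have : 2 * (i + 1) = (2 * i + 1) + 1 := by ring
      rw [this, dig_succ r hr, dig_succ r hr]
      have : M / r / r = M / r ^ 2 := by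
        rw [Nat.div_div_eq_div_mul, sq]
      rw [this, pow_succ]
      ring
    simp only [h1]
    rw [← Finset.mul_sum, Ef, ih]
    ring

lemma core_exists (r : ℕ) (hr : 2 ≤ r) :
    ∀ T M, M < r ^ (2 * T) →
      moser r (Ef r T M) + r * moser r (Ef r T (M / r)) = M := by
  intro T
  induction T with
  | zero =>
    intro M hM
    have hM0 : M = 0 := by simpa using hM
    subst hM0
    simp [Ef, moser_zero]
  | succ T ih =>
    intro M hM
    have hr0 : 0 < r := by omega
    have hrr : 0 < r ^ 2 := by positivity
    have hMlt : M / r ^ 2 < r ^ (2 * T) := by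
      rw [Nat.div_lt_iff_lt_mul hrr]
      calc M < r ^ (2 * (T + 1)) := hM
        _ = r ^ (2 * T) * r ^ 2 := by rw [← pow_add]; ring_nf
    have hdd : M / r / r ^ 2 = M / r ^ 2 / r := by
      rw [Nat.div_div_eq_div_mul, Nat.div_div_eq_div_mul, mul_comm]
    have hE : Ef r (T + 1) M = M % r + r * Ef r T (M / r ^ 2) := rfl
    have hO : Ef r (T + 1) (M / r) = M / r % r + r * Ef r T (M / r ^ 2 / r) := by
      rw [show Ef r (T+1) (M/r) = M / r % r + r * Ef r T (M / r / r ^ 2) from rfl, hdd]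
    have hmE : moser r (Ef r (T + 1) M)
        = M % r + r ^ 2 * moser r (Ef r T (M / r ^ 2)) := by
      rw [hE, moser_rec r hr]
      congr 1
      · rw [Nat.add_mul_mod_self_left]
        exact Nat.mod_mod_of_dvd M dvd_rfl
      · congr 1
        rw [Nat.add_mul_div_left _ _ hr0, Nat.div_eq_of_lt (Nat.mod_lt _ hr0), zero_add]
    have hmO : moser r (Ef r (T + 1) (M / r))
        = M / r % r + r ^ 2 * moser r (Ef r T (M / r ^ 2 / r)) := by
      rw [hO, moser_rec r hr]
      congr 1
      · rw [Nat.add_mul_mod_self_left]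
        exact Nat.mod_mod_of_dvd _ dvd_rfl
      · congr 1
        rw [Nat.add_mul_div_left _ _ hr0, Nat.div_eq_of_lt (Nat.mod_lt _ hr0), zero_add]
    rw [hmE, hmO]
    have key := ih (M / r ^ 2) hMlt
    have h2 : M % r + r ^ 2 * moser r (Ef r T (M / r ^ 2)) +
        r * (M / r % r + r ^ 2 * moser r (Ef r T (M / r ^ 2 / r)))
        = M % r + r * (M / r % r +
            r * (moser r (Ef r T (M / r ^ 2)) + r * moser r (Ef r T (M / r ^ 2 / r)))) := by
      ring
    rw [h2, key]
    have h3 : M / r % r + r * (M / r ^ 2) = M / r := by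
      rw [sq, ← Nat.div_div_eq_div_mul]
      exact Nat.mod_add_div _ _
    rw [h3, Nat.mod_add_div]

lemma moser_le (r : ℕ) (hr : 2 ≤ r) : ∀ n, n ≤ moser r n := by
  intro n
  induction n using Nat.strong_induction_on with
  | _ n ih =>
    rcases Nat.eq_zero_or_pos n with h | h
    · subst h; simp
    · have hr0 : 0 < r := by omega
      rw [moser_rec r hr]
      have h1 : n / r ≤ moser r (n / r) := ih _ (Nat.div_lt_self h (by omega))
      calc n = n % r + r * (n / r) := (Nat.mod_add_div _ _).symm
        _ ≤ n % r + r ^ 2 * (n / r) := by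
            have : r * (n / r) ≤ r ^ 2 * (n / r) := by
              apply Nat.mul_le_mul_right
              calc r = r ^ 1 := (pow_one r).symm
                _ ≤ r ^ 2 := Nat.pow_le_pow_right hr0 (by omega)
            omega
        _ ≤ n % r + r ^ 2 * moser r (n / r) := by
            have := Nat.mul_le_mul_left (r ^ 2) h1
            omega

lemma core_unique (r : ℕ) (hr : 2 ≤ r) :
    ∀ T M a b, M < r ^ (2 * T) → moser r a + r * moser r b = M →
      a = Ef r T M ∧ b = Ef r T (M / r) := by
  intro T
  induction T with
  | zero =>
    intro M a b hM heq
    have hM0 : M = 0 := by simpa using hM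
    subst hM0
    have hr0 : 0 < r := by omega
    have ha : moser r a = 0 := by omega
    have hb : moser r b = 0 := by
      have hb1 : r * moser r b = 0 := by omega
      rcases Nat.mul_eq_zero.mp hb1 with h | h
      · omega
      · exact h
    have ha' : a = 0 := by have := moser_le r hr a; omega
    have hb' : b = 0 := by have := moser_le r hr b; omega
    simp [ha', hb', Ef]
  | succ T ih =>
    intro M a b hM heq
    have hr0 : 0 < r := by omega
    have hrr : 0 < r ^ 2 := by positivity
    have hMlt : M / r ^ 2 < r ^ (2 * T) := by
      rw [Nat.div_lt_iff_lt_mul hrr]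
      calc M < r ^ (2 * (T + 1)) := hM
        _ = r ^ (2 * T) * r ^ 2 := by rw [← pow_add]; ring_nf
    have hma := moser_rec r hr a
    have hmb := moser_rec r hr b
    have heq' : M = a % r + r * (b % r + r * (moser r (a / r) + r * moser r (b / r))) := by
      rw [← heq, hma, hmb]; ring
    have hamod : M % r = a % r := by
      rw [heq', Nat.add_mul_mod_self_left]
      exact Nat.mod_eq_of_lt (Nat.mod_lt _ hr0)
    have hMr : M / r = b % r + r * (moser r (a / r) + r * moser r (b / r)) := by
      rw [heq', Nat.add_mul_div_left _ _ hr0, Nat.div_eq_of_lt (Nat.mod_lt _ hr0), zero_add]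
    have hbmod : M / r % r = b % r := by
      rw [hMr, Nat.add_mul_mod_self_left]
      exact Nat.mod_eq_of_lt (Nat.mod_lt _ hr0)
    have hMr2 : M / r ^ 2 = moser r (a / r) + r * moser r (b / r) := by
      rw [sq, ← Nat.div_div_eq_div_mul, hMr,
        Nat.add_mul_div_left _ _ hr0, Nat.div_eq_of_lt (Nat.mod_lt _ hr0), zero_add]
    obtain ⟨ha2, hb2⟩ := ih (M / r ^ 2) (a / r) (b / r) hMlt hMr2.symm
    constructor
    · have : a = a % r + r * (a / r) := (Nat.mod_add_div _ _).symm
      rw [this, ha2, ← hamod]; rfl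
    · have : b = b % r + r * (b / r) := (Nat.mod_add_div _ _).symm
      have hdd : M / r ^ 2 / r = M / r / r ^ 2 := by
        rw [Nat.div_div_eq_div_mul, Nat.div_div_eq_div_mul, mul_comm]
      rw [this, hb2, ← hbmod, hdd]; rfl

/-- Explicit decomposition for `s^(r)`: if `N ≡ 1 (mod r)`, `N ≥ r + 1`, and
`N − r = Σ_j c_j r^j` in base `r`, then `k = 1 + Σ c_{2i+1} r^i` and
`l = 1 + Σ c_{2i+2} r^i` give the unique representation `N = s^(r)_k + r·s^(r)_l`. -/
theorem moserS_explicit_decomposition (r : ℕ) (hr : 2 ≤ r) (N : ℕ)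
    (hN1 : N % r = 1) (hNr : r + 1 ≤ N)
    (k l : ℕ)
    (hk : k = 1 + ∑ i ∈ Finset.range (N + 1), dig r (N - r) (2 * i + 1) * r ^ i)
    (hl : l = 1 + ∑ i ∈ Finset.range (N + 1), dig r (N - r) (2 * i + 2) * r ^ i) :
    N = moserS r k + r * moserS r l ∧
      ∀ k' l' : ℕ, 1 ≤ k' → 1 ≤ l' → N = moserS r k' + r * moserS r l' →
        k' = k ∧ l' = l := by
  have hr0 : 0 < r := by omega
  obtain ⟨q, hq⟩ : ∃ q, N = r * q + 1 := by
    refine ⟨N / r, ?_⟩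
    conv_lhs => rw [← Nat.div_add_mod N r]
    rw [hN1]
  have hq1 : 1 ≤ q := by
    rcases Nat.eq_zero_or_pos q with h | h
    · subst h; simp at hq; omega
    · exact h
  obtain ⟨M, hqM⟩ : ∃ M, q = M + 1 := ⟨q - 1, by omega⟩
  have hNM : N = r * M + (1 + r) := by
    rw [hq, hqM]; ring
  have hB : M < r ^ (2 * (N + 1)) := by
    have h1 : M ≤ r * M := Nat.le_mul_of_pos_left M hr0
    have h2 : N < 2 ^ N := Nat.lt_two_pow_self (n := N)
    have h3 : (2 : ℕ) ^ N ≤ r ^ N := Nat.pow_le_pow_left hr N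
    have h4 : r ^ N ≤ r ^ (2 * (N + 1)) := Nat.pow_le_pow_right hr0 (by omega)
    omega
  have hNrM : N - r = r * M + 1 := by
    rw [hNM]; omega
  have hNrdiv : (N - r) / r = M := by
    rw [hNrM, Nat.mul_add_div hr0, Nat.div_eq_of_lt (by omega)]
    omega
  have hdig : ∀ j, dig r (N - r) (j + 1) = dig r M j := by
    intro j
    rw [dig_succ r hr, hNrdiv]
  have hk' : k = 1 + Ef r (N + 1) M := by
    rw [hk, Ef_sum r hr]
    congr 1
    apply Finset.sum_congr rfl
    intro i _
    rw [hdig (2 * i)]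
  have hl' : l = 1 + Ef r (N + 1) (M / r) := by
    rw [hl, Ef_sum r hr]
    congr 1
    apply Finset.sum_congr rfl
    intro i _
    have : 2 * i + 2 = (2 * i + 1) + 1 := by ring
    rw [this, hdig (2 * i + 1), dig_succ r hr]
  have hcore := core_exists r hr (N + 1) M hB
  have e1 : moserS r k = r * moser r (Ef r (N + 1) M) + 1 := by
    rw [moserS, hk']; simp
  have e2 : moserS r l = r * moser r (Ef r (N + 1) (M / r)) + 1 := by
    rw [moserS, hl']; simp
  constructor
  · rw [e1, e2]
    have : r * moser r (Ef r (N + 1) M) + 1 + r * (r * moser r (Ef r (N + 1) (M / r)) + 1)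
        = r * (moser r (Ef r (N + 1) M) + r * moser r (Ef r (N + 1) (M / r))) + (1 + r) := by
      ring
    rw [this, hcore]
    exact hNM
  · intro k' l' hk1 hl1 h'
    have e1' : moserS r k' = r * moser r (k' - 1) + 1 := rfl
    have e2' : moserS r l' = r * moser r (l' - 1) + 1 := rfl
    have h'' : r * (moser r (k' - 1) + r * moser r (l' - 1)) + (1 + r) = r * M + (1 + r) := by
      rw [← hNM, h', e1', e2']; ring
    have hX : moser r (k' - 1) + r * moser r (l' - 1) = M :=
      Nat.eq_of_mul_eq_mul_left hr0 (by omega)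
    obtain ⟨h1, h2⟩ := core_unique r hr (N + 1) M (k' - 1) (l' - 1) hB hX
    constructor
    · rw [hk']
      omega
    · rw [hl']
      omega
end

section
/- Let r ≥ 2 be an integer. For every n ≥ 2, s^{(r)}_n = s^{(r)}_{n−1} + (r^{2(t+1)} + r)/(r + 1), where t ≥ 0 is the largest integer such that r^t divides n − 1; note that r + 1 divides r^{2(t+1)} + r, so the quotient is an integer. -/
lemma moser_step (r : ℕ) (hr : 2 ≤ r) (a d : ℕ) (hd : d < r) (h : 0 < r * a + d) :
    moser r (r * a + d) = d + r ^ 2 * moser r a := by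
  unfold moser
  rw [Nat.digits_def' (by omega : 1 < r) h, Nat.ofDigits_cons]
  have h1 : (r * a + d) % r = d := by
    rw [add_comm, Nat.add_mul_mod_self_left]; exact Nat.mod_eq_of_lt hd
  have h2 : (r * a + d) / r = a := by
    rw [add_comm, Nat.add_mul_div_left _ _ (by omega : 0 < r), Nat.div_eq_of_lt hd]
    omega
  rw [h1, h2]

lemma key (r : ℕ) (hr : 2 ≤ r) : ∀ t k : ℕ, 1 ≤ k → ¬ r ∣ k →
    (r + 1) * moser r (r ^ t * k) = (r + 1) * moser r (r ^ t * k - 1) + (r ^ (2 * t + 1) + 1) := by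
  intro t
  induction t with
  | zero =>
    intro k hk hnd
    have hd : k % r ≠ 0 := fun h => hnd (Nat.dvd_of_mod_eq_zero h)
    have hdr : k % r < r := Nat.mod_lt _ (by omega)
    have h0 := Nat.div_add_mod k r
    obtain ⟨d, hd'⟩ : ∃ d, k % r = d + 1 := ⟨k % r - 1, by omega⟩
    have hk1 : k = r * (k / r) + (d + 1) := by omega
    have e1 : moser r k = (d + 1) + r ^ 2 * moser r (k / r) := by
      conv_lhs => rw [hk1]
      exact moser_step r hr _ _ (by omega) (by omega)
    have e2 : moser r (k - 1) = d + r ^ 2 * moser r (k / r) := by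
      have hk2 : k - 1 = r * (k / r) + d := by omega
      rw [hk2]
      rcases Nat.eq_zero_or_pos (r * (k / r) + d) with h0' | h0'
      · have h1 : d = 0 := by omega
        have h2 : k / r = 0 := by
          have hz : r * (k / r) = 0 := by omega
          rcases Nat.mul_eq_zero.mp hz with h | h
          · omega
          · exact h
        simp [h1, h2, moser]
      · exact moser_step r hr _ _ (by omega) h0'
    simp only [pow_zero, one_mul]
    rw [e1, e2]
    ring
  | succ t ih =>
    intro k hk hnd
    have iht := ih k hk hnd
    obtain ⟨A, hA⟩ : ∃ A, r ^ t * k = A + 1 :=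
      ⟨r ^ t * k - 1, by
        have : 0 < r ^ t * k := Nat.mul_pos (pow_pos (by omega) t) (by omega)
        omega⟩
    rw [hA, Nat.add_sub_cancel] at iht
    have hm : r ^ (t + 1) * k = r * (A + 1) + 0 := by rw [pow_succ, mul_comm (r^t) r, mul_assoc, hA]; omega
    have e1 : moser r (r ^ (t + 1) * k) = 0 + r ^ 2 * moser r (A + 1) := by
      rw [hm]
      exact moser_step r hr _ _ (by omega)
        (by have := Nat.mul_pos (show 0 < r by omega) (show 0 < A + 1 by omega); omega)
    have h3 : r ^ (t + 1) * k = r * A + r := by rw [hm]; ring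
    have hm2 : r ^ (t + 1) * k - 1 = r * A + (r - 1) := by omega
    have e2 : moser r (r ^ (t + 1) * k - 1) = (r - 1) + r ^ 2 * moser r A := by
      rw [hm2]
      exact moser_step r hr _ _ (by omega) (by omega)
    rw [e1, e2]
    set M1 := moser r (A + 1) with hM1
    set M0 := moser r A with hM0
    have hx : (r + 1) * (r - 1) + (r + 1) = (r + 1) * r := by
      have h1 : r - 1 + 1 = r := by omega
      calc (r + 1) * (r - 1) + (r + 1) = (r + 1) * ((r - 1) + 1) := by ring
        _ = (r + 1) * r := by rw [h1]
    have h : (r + 1) * (0 + r ^ 2 * M1) + (r + 1)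
        = ((r + 1) * ((r - 1) + r ^ 2 * M0) + (r ^ (2 * (t + 1) + 1) + 1)) + (r + 1) := by
      calc (r + 1) * (0 + r ^ 2 * M1) + (r + 1)
          = r ^ 2 * ((r + 1) * M1) + (r + 1) := by ring
        _ = r ^ 2 * ((r + 1) * M0 + (r ^ (2 * t + 1) + 1)) + (r + 1) := by rw [iht]
        _ = (r + 1) * (r ^ 2 * M0) + (r + 1) * r + (r ^ (2 * (t + 1) + 1) + 1) := by ring
        _ = (r + 1) * (r ^ 2 * M0) + ((r + 1) * (r - 1) + (r + 1)) + (r ^ (2 * (t + 1) + 1) + 1) := by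
            rw [hx]
        _ = ((r + 1) * ((r - 1) + r ^ 2 * M0) + (r ^ (2 * (t + 1) + 1) + 1)) + (r + 1) := by ring
    omega

/-- Recursion for `s^(r)`: for `n ≥ 2`,
`s^(r)_n = s^(r)_{n−1} + (r^(2(t+1)) + r)/(r + 1)` where `t` is the largest integer with
`r^t ∣ n − 1`; moreover `r + 1` divides `r^(2(t+1)) + r`. -/
theorem moserS_recursion (r : ℕ) (hr : 2 ≤ r) (n : ℕ) (hn : 2 ≤ n)
    (t : ℕ) (ht : r ^ t ∣ n - 1) (ht' : ¬ r ^ (t + 1) ∣ n - 1) :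
    (r + 1) ∣ r ^ (2 * (t + 1)) + r ∧
      moserS r n = moserS r (n - 1) + (r ^ (2 * (t + 1)) + r) / (r + 1) := by
  set m := n - 1 with hm
  obtain ⟨k, hk⟩ := ht
  have hk1 : 1 ≤ k := by
    rcases Nat.eq_zero_or_pos k with h | h
    · exfalso; rw [h, mul_zero] at hk; omega
    · exact h
  have hnd : ¬ r ∣ k := by
    intro ⟨c, hc⟩
    exact ht' ⟨c, by rw [hk, hc, pow_succ]; ring⟩
  have hkey := key r hr t k hk1 hnd
  rw [← hk] at hkey
  -- hkey : (r+1) * moser r m = (r+1) * moser r (m-1) + (r^(2t+1) + 1)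
  set M1 := moser r m with hM1
  set M0 := moser r (m - 1) with hM0
  have hmono : M0 ≤ M1 :=
    Nat.le_of_mul_le_mul_left (show (r + 1) * M0 ≤ (r + 1) * M1 by omega) (by omega)
  have hsub : (r + 1) * (M1 - M0) = (r + 1) * M1 - (r + 1) * M0 := Nat.mul_sub _ _ _
  have hdvd1 : (r + 1) ∣ r ^ (2 * t + 1) + 1 := ⟨M1 - M0, by rw [hsub]; omega⟩
  have hpow : r ^ (2 * (t + 1)) + r = r * (r ^ (2 * t + 1) + 1) := by ring
  refine ⟨by rw [hpow]; exact hdvd1.mul_left r, ?_⟩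
  have hq : (r ^ (2 * (t + 1)) + r) / (r + 1) = r * (M1 - M0) := by
    obtain ⟨q, hqq⟩ := hdvd1
    have hq2 : (r + 1) * q = (r + 1) * (M1 - M0) := by rw [hsub]; omega
    have hq' : q = M1 - M0 := Nat.eq_of_mul_eq_mul_left (by omega) hq2
    rw [hpow, hqq, ← mul_assoc, mul_comm r (r + 1), mul_assoc,
      Nat.mul_div_cancel_left _ (by omega : 0 < r + 1), hq']
  have h2 : n - 1 - 1 = m - 1 := by omega
  simp only [moserS, hq, ← hm, h2, ← hM1, ← hM0]
  have := Nat.mul_le_mul_left r hmono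
  rw [Nat.mul_sub]
  omega
end

section
/- For every n ≥ 2, W(s^{(2)}_n − 2) = s^{(2)}_{n−1}. -/
def ET : ℕ → ℕ × ℕ
  | 0 => (0, 0)
  | n+1 => ((n+1) % 2 + 2 * (ET ((n+1)/2)).2, 2 * (ET ((n+1)/2)).1)
decreasing_by
  all_goals exact Nat.div_lt_self (Nat.succ_pos n) one_lt_two

lemma ET_zero : ET 0 = (0, 0) := by rw [ET]

lemma ET_pos (x : ℕ) (hx : 0 < x) :
    ET x = (x % 2 + 2 * (ET (x/2)).2, 2 * (ET (x/2)).1) := by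
  obtain ⟨y, rfl⟩ : ∃ y, x = y + 1 := ⟨x - 1, by omega⟩
  rw [ET]

lemma Od_def (x : ℕ) : (ET x).2 = 2 * (ET (x/2)).1 := by
  rcases Nat.eq_zero_or_pos x with rfl | hx
  · rw [ET_zero]; rfl
  · rw [ET_pos x hx]

lemma Ev_def (x : ℕ) : (ET x).1 = x % 2 + 2 * (ET (x/2)).2 := by
  rcases Nat.eq_zero_or_pos x with rfl | hx
  · rw [ET_zero]; rfl
  · rw [ET_pos x hx]

def Ssum (j : ℕ) (l : List ℕ) : ℕ :=
  ((((l.zipIdx j).map Prod.swap).filter (fun p => p.1 % 2 = 1)).map (fun p => p.2 * 2 ^ p.1)).sum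

lemma Ssum_nil (j : ℕ) : Ssum j [] = 0 := rfl

lemma Ssum_cons (j a : ℕ) (l : List ℕ) :
    Ssum j (a :: l) = (if j % 2 = 1 then a * 2 ^ j else 0) + Ssum (j+1) l := by
  unfold Ssum
  rw [List.zipIdx_cons, List.map_cons]
  by_cases h : j % 2 = 1 <;> simp [List.filter_cons, h]

lemma Ssum_digits (m : ℕ) : ∀ j, Ssum j (Nat.digits 2 m) =
    2 ^ j * (if j % 2 = 1 then (ET m).1 else (ET m).2) := by
  induction m using Nat.strong_induction_on with
  | _ m ih =>
    intro j
    rcases Nat.eq_zero_or_pos m with rfl | hm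
    · simp [Ssum_nil, ET_zero]
    · rw [Nat.digits_def' one_lt_two hm, Ssum_cons,
        ih (m / 2) (Nat.div_lt_self hm one_lt_two)]
      by_cases h : j % 2 = 1
      · have h1 : (j + 1) % 2 = 0 := by omega
        rw [Ev_def m]
        simp [h, h1]
        ring
      · have h1 : (j + 1) % 2 = 1 := by omega
        rw [Od_def m]
        simp [h, h1]
        ring

lemma moser_two (j b : ℕ) (hb : b < 2) (h : 0 < 2 * j + b) :
    moser 2 (2 * j + b) = 4 * moser 2 j + b := by
  unfold moser
  rw [Nat.digits_def' one_lt_two h]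
  have h1 : (2 * j + b) % 2 = b := by omega
  have h2 : (2 * j + b) / 2 = j := by omega
  rw [h1, h2, Nat.ofDigits_cons]
  push_cast
  ring

lemma moser_even (j : ℕ) (hj : 0 < j) : moser 2 (2 * j) = 4 * moser 2 j := by
  have := moser_two j 0 (by norm_num) (by omega)
  simpa using this

lemma moser_odd (j : ℕ) : moser 2 (2 * j + 1) = 4 * moser 2 j + 1 :=
  moser_two j 1 one_lt_two (by omega)

lemma moser_pos (k : ℕ) (hk : 1 ≤ k) : 1 ≤ moser 2 k := by
  induction k using Nat.strong_induction_on with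
  | _ k ih =>
    rcases Nat.even_or_odd k with ⟨j, hj⟩ | ⟨j, hj⟩
    · have hj1 : 1 ≤ j := by omega
      obtain rfl : k = 2 * j := by omega
      rw [moser_even j hj1]
      have := ih j (by omega) hj1
      omega
    · obtain rfl : k = 2 * j + 1 := by omega
      rw [moser_odd j]
      omega

lemma ET_sum (x : ℕ) : (ET x).1 + (ET x).2 = x := by
  induction x using Nat.strong_induction_on with
  | _ x ih =>
    rcases Nat.eq_zero_or_pos x with rfl | hx
    · rw [ET_zero]; rfl
    · rw [Ev_def x, Od_def x]
      have := ih (x / 2) (Nat.div_lt_self hx one_lt_two)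
      omega

lemma Od_moser (k : ℕ) : (ET (moser 2 k)).2 = 0 := by
  induction k using Nat.strong_induction_on with
  | _ k ih =>
    rcases Nat.eq_zero_or_pos k with rfl | hk
    · simp [moser, ET_zero]
    rcases Nat.even_or_odd k with ⟨j, hj⟩ | ⟨j, hj⟩
    · obtain rfl : k = 2 * j := by omega
      have hj1 : 0 < j := by omega
      rw [moser_even j hj1, Od_def, show 4 * moser 2 j / 2 = 2 * moser 2 j by omega,
        Ev_def, show (2 * moser 2 j) % 2 = 0 by omega,
        show 2 * moser 2 j / 2 = moser 2 j by omega, ih j (by omega)]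
    · obtain rfl : k = 2 * j + 1 := by omega
      rw [moser_odd j, Od_def, show (4 * moser 2 j + 1) / 2 = 2 * moser 2 j by omega,
        Ev_def, show (2 * moser 2 j) % 2 = 0 by omega,
        show 2 * moser 2 j / 2 = moser 2 j by omega, ih j (by omega)]

lemma Ev_moser_sub_one (k : ℕ) (hk : 1 ≤ k) :
    (ET (moser 2 k - 1)).1 = moser 2 (k - 1) := by
  induction k using Nat.strong_induction_on with
  | _ k ih =>
    rcases Nat.even_or_odd k with ⟨j, hj⟩ | ⟨j, hj⟩
    · obtain rfl : k = 2 * j := by omega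
      have hj1 : 1 ≤ j := by omega
      have hmk : moser 2 (2 * j - 1) = 4 * moser 2 (j - 1) + 1 := by
        rw [show 2 * j - 1 = 2 * (j - 1) + 1 by omega, moser_odd (j-1)]
      have hpos : 1 ≤ moser 2 j := moser_pos j hj1
      have hE : (ET (moser 2 j - 1)).1 = moser 2 (j - 1) := ih j (by omega) hj1
      rw [moser_even j hj1, hmk, Ev_def, show (4 * moser 2 j - 1) % 2 = 1 by omega,
        show (4 * moser 2 j - 1) / 2 = 2 * (moser 2 j - 1) + 1 by omega,
        Od_def, show (2 * (moser 2 j - 1) + 1) / 2 = moser 2 j - 1 by omega, hE]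
      ring
    · obtain rfl : k = 2 * j + 1 := by omega
      have hmk : moser 2 (2 * j + 1 - 1) = 4 * moser 2 j := by
        rcases Nat.eq_zero_or_pos j with rfl | hjp
        · simp [moser, Nat.ofDigits]
        rw [show 2 * j + 1 - 1 = 2 * j by omega, moser_even j hjp]
      rw [moser_odd j, show 4 * moser 2 j + 1 - 1 = 4 * moser 2 j by omega, hmk]
      rw [Ev_def, show (4 * moser 2 j) % 2 = 0 by omega,
        show 4 * moser 2 j / 2 = 2 * moser 2 j by omega,
        Od_def, show 2 * moser 2 j / 2 = moser 2 j by omega]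
      have h1 := ET_sum (moser 2 j)
      have h2 := Od_moser j
      omega

/-- For every `n ≥ 2`, `W(s^(2)_n − 2) = s^(2)_{n−1}`. -/
theorem W_moserS_sub_two (n : ℕ) (hn : 2 ≤ n) :
    W (moserS 2 n - 2) = moserS 2 (n - 1) := by
  have hm : 1 ≤ moser 2 (n - 1) := moser_pos (n - 1) (by omega)
  set m := moser 2 (n - 1) with hmdef
  have h1 : moserS 2 n - 2 = 2 * m - 1 := by
    unfold moserS; omega
  have hmod : (2 * m - 1) % 2 = 1 := by omega
  have hsum : ((((Nat.digits 2 (2 * m - 1)).zipIdx.map Prod.swap).filter (fun p => p.1 % 2 = 1)).map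
      (fun p => p.2 * 2 ^ p.1)).sum = Ssum 0 (Nat.digits 2 (2 * m - 1)) := rfl
  rw [h1]
  unfold W
  simp only [hmod, if_pos]
  rw [hsum, Ssum_digits]
  simp only [show ¬ (0 % 2 = 1) by omega, if_neg, pow_zero, one_mul]
  rw [Od_def, show (2 * m - 1) / 2 = m - 1 by omega,
    Ev_moser_sub_one (n - 1) (by omega)]
  unfold moserS
  rw [if_neg (by simp)]
  omega
end

section
/- For every n ≥ 2, W((s^{(2)}_n − 1)/2) = (4^{t+1} + 2)/6, where t ≥ 0 is the largest integer such that 2^t divides n − 1; note that 6 divides 4^{t+1} + 2, so the quotient is an integer. -/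
/-- Parity-weighted sum of a digit list: `pSum b l` sums `dᵢ·2^i` over the positions `i`
whose parity "counts" (positions alternate, starting with `b`). -/
def pSum : Bool → List ℕ → ℕ
  | _, [] => 0
  | b, a :: l => (if b then a else 0) + 2 * pSum (!b) l

lemma enumFrom_sum (L : List ℕ) : ∀ i : ℕ,
    ((((L.zipIdx i).map Prod.swap).filter (fun p => p.1 % 2 = 1)).map (fun p => p.2 * 2 ^ p.1)).sum
      = 2 ^ i * pSum (decide (i % 2 = 1)) L := by
  induction L with
  | nil => intro i; simp [pSum]
  | cons a l ih =>
    intro i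
    have h2 : ((a :: l).zipIdx i).map Prod.swap = (i, a) :: (l.zipIdx (i + 1)).map Prod.swap := rfl
    rw [h2]
    rcases Nat.mod_two_eq_zero_or_one i with h | h
    · have h' : (i + 1) % 2 = 1 := by omega
      simp [List.filter_cons, h, h', ih, pSum, pow_succ]
      ring
    · have h' : (i + 1) % 2 = 0 := by omega
      simp [List.filter_cons, h, h', ih, pSum, pow_succ]
      ring

/-- Sum of the odd-position binary digits of `x`, weighted by `2^position`. -/
def O (x : ℕ) : ℕ := pSum false (Nat.digits 2 x)

lemma W_eq (N : ℕ) : W N = 1 + O (if N % 2 = 1 then N else N - 1) := by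
  have h := enumFrom_sum (Nat.digits 2 (if N % 2 = 1 then N else N - 1)) 0
  simp only [pow_zero, one_mul] at h
  rw [W]
  show 1 + _ = 1 + O _
  rw [show (Nat.digits 2 (if N % 2 = 1 then N else N - 1)).zipIdx
      = (Nat.digits 2 (if N % 2 = 1 then N else N - 1)).zipIdx 0 from rfl, h]
  norm_num [O]

lemma digits_two_mul (y : ℕ) (hy : 0 < y) : Nat.digits 2 (2*y) = 0 :: Nat.digits 2 y := by
  rw [Nat.digits_def' (by norm_num : (1:ℕ) < 2) (by omega)]
  congr 1
  · omega
  · congr 1; omega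

lemma digits_two_mul_add_one (y : ℕ) : Nat.digits 2 (2*y+1) = 1 :: Nat.digits 2 y := by
  rw [Nat.digits_def' (by norm_num : (1:ℕ) < 2) (by omega)]
  congr 1
  · omega
  · congr 1; omega

lemma O_four_mul (x : ℕ) : O (4 * x) = 4 * O x := by
  rcases Nat.eq_zero_or_pos x with rfl | hx
  · simp [O, pSum]
  · have h1 : Nat.digits 2 (4 * x) = 0 :: 0 :: Nat.digits 2 x := by
      rw [show 4 * x = 2 * (2 * x) by ring, digits_two_mul _ (by omega),
        digits_two_mul _ hx]
    rw [O, h1]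
    simp [pSum, O]
    ring

lemma O_four_mul_add_one (x : ℕ) : O (4 * x + 1) = 4 * O x := by
  rcases Nat.eq_zero_or_pos x with rfl | hx
  · simp [O, pSum]
  · have h1 : Nat.digits 2 (4 * x + 1) = 1 :: 0 :: Nat.digits 2 x := by
      rw [show 4 * x + 1 = 2 * (2 * x) + 1 by ring, digits_two_mul_add_one,
        digits_two_mul _ hx]
    rw [O, h1]
    simp [pSum, O]
    ring

lemma O_four_mul_add_three (x : ℕ) : O (4 * x + 3) = 2 + 4 * O x := by
  have h1 : Nat.digits 2 (4 * x + 3) = 1 :: 1 :: Nat.digits 2 x := by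
    rw [show 4 * x + 3 = 2 * (2 * x + 1) + 1 by ring, digits_two_mul_add_one,
      digits_two_mul_add_one]
  rw [O, h1]
  simp [pSum, O]
  ring

lemma moser_rec_s13 (m : ℕ) (hm : 0 < m) :
    moser 2 m = 4 * moser 2 (m / 2) + m % 2 := by
  rw [moser, Nat.digits_def' (by norm_num : (1:ℕ) < 2) hm, Nat.ofDigits_cons, moser]
  norm_num
  ring

lemma moser_pos_s13 (m : ℕ) (hm : 0 < m) : 0 < moser 2 m := by
  induction m using Nat.strong_induction_on with
  | _ m ih =>
    rw [moser_rec_s13 m hm]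
    rcases Nat.mod_two_eq_zero_or_one m with h | h
    · have h2 : 0 < m / 2 := by omega
      have := ih (m / 2) (by omega) h2
      omega
    · omega

lemma O_moser (m : ℕ) : O (moser 2 m) = 0 := by
  induction m using Nat.strong_induction_on with
  | _ m ih =>
    rcases Nat.eq_zero_or_pos m with rfl | hm
    · simp [moser, O, pSum]
    · rw [moser_rec_s13 m hm]
      rcases Nat.mod_two_eq_zero_or_one m with h | h <;> rw [h]
      · rw [Nat.add_zero, O_four_mul, ih (m / 2) (by omega)]
      · rw [O_four_mul_add_one, ih (m / 2) (by omega)]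

lemma Q_formula (t : ℕ) : ∀ q : ℕ, q % 2 = 1 →
    3 * O (moser 2 (2 ^ t * q) - 1) + 2 = 2 * 4 ^ t := by
  induction t with
  | zero =>
    intro q hq
    simp only [pow_zero, one_mul]
    have hq1 : 0 < q := by omega
    rw [moser_rec_s13 q hq1, hq]
    have h : 4 * moser 2 (q / 2) + 1 - 1 = 4 * moser 2 (q / 2) := by omega
    rw [h, O_four_mul, O_moser]
    norm_num
  | succ t ih =>
    intro q hq
    set m' := 2 ^ t * q with hm'
    have hm'pos : 0 < m' := by
      have : 0 < q := by omega
      positivity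
    have hmeq : 2 ^ (t + 1) * q = 2 * m' := by rw [hm', pow_succ]; ring
    rw [hmeq]
    have h2m : 0 < 2 * m' := by omega
    rw [moser_rec_s13 _ h2m]
    have hdiv : 2 * m' / 2 = m' := by omega
    rw [hdiv]
    have hN' : 0 < moser 2 m' := moser_pos_s13 m' hm'pos
    have hsub : 4 * moser 2 m' + 2 * m' % 2 - 1 = 4 * (moser 2 m' - 1) + 3 := by omega
    rw [hsub, O_four_mul_add_three]
    have hih := ih q hq
    rw [← hm'] at hih
    have h4 : (4:ℕ) ^ (t + 1) = 4 * 4 ^ t := by rw [pow_succ]; ring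
    omega

/-- For every `n ≥ 2`, `W((s^(2)_n − 1)/2) = (4^(t+1) + 2)/6`, where `t` is the largest
integer with `2^t ∣ n − 1`; moreover `6` divides `4^(t+1) + 2`. -/
theorem W_moserS_formula (n : ℕ) (hn : 2 ≤ n)
    (t : ℕ) (ht : 2 ^ t ∣ n - 1) (ht' : ¬ 2 ^ (t + 1) ∣ n - 1) :
    6 ∣ 4 ^ (t + 1) + 2 ∧
      W ((moserS 2 n - 1) / 2) = (4 ^ (t + 1) + 2) / 6 := by
  set m := n - 1 with hm
  have hm1 : 1 ≤ m := by omega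
  have hNdef : (moserS 2 n - 1) / 2 = moser 2 m := by
    rw [moserS, ← hm]
    omega
  rw [hNdef]
  set N := moser 2 m with hN
  have hNrec : N = 4 * moser 2 (m / 2) + m % 2 := moser_rec_s13 m (by omega)
  obtain ⟨q, hq⟩ := id ht
  have hqodd : q % 2 = 1 := by
    rcases Nat.mod_two_eq_zero_or_one q with h | h
    · exfalso
      apply ht'
      obtain ⟨q', hq'⟩ : 2 ∣ q := by omega
      exact ⟨q', by rw [hq, hq', pow_succ]; ring⟩
    · exact h
  rcases Nat.mod_two_eq_zero_or_one m with hpar | hpar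
  · -- m even, so t ≥ 1
    have ht1 : 1 ≤ t := by
      by_contra h
      have h0 : t = 0 := by omega
      subst h0
      apply ht'
      have h2 : (2:ℕ) ^ (0 + 1) = 2 := by norm_num
      rw [h2]
      omega
    have hNeven : ¬ (N % 2 = 1) := by omega
    have hQ := Q_formula t q hqodd
    rw [← hq, ← hN] at hQ
    rw [W_eq, if_neg hNeven]
    have h4 : (4:ℕ) ^ (t + 1) = 4 * 4 ^ t := by rw [pow_succ]; ring
    rw [h4]
    constructor
    · exact ⟨1 + O (N - 1), by omega⟩
    · omega
  · -- m odd, so t = 0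
    have ht0 : t = 0 := by
      by_contra h
      have h1 : 1 ≤ t := by omega
      have h2 : 2 ∣ m := dvd_trans (dvd_pow_self 2 (by omega)) ht
      omega
    subst ht0
    have hNodd : N % 2 = 1 := by omega
    rw [W_eq, if_pos hNodd, hN, O_moser]
    norm_num
end

section
/- Let a ≥ 1 and b ≥ 1 be integers and define s_n(a,b) = a + b·(s^{(2)}_n − 1) for n ≥ 1. Then every integer of the form 3a + 2bn with n ≥ 0 has exactly one representation 3a + 2bn = s_k(a,b) + 2·s_l(a,b) with integers k, l ≥ 1. -/
lemma moser_two_zero : moser 2 0 = 0 := by simp [moser]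

lemma moser_two_even (x : ℕ) : moser 2 (2 * x) = 4 * moser 2 x := by
  rcases Nat.eq_zero_or_pos x with h | h
  · simp [h, moser]
  · unfold moser
    rw [Nat.digits_def' (by norm_num : 1 < 2) (by omega)]
    simp [Nat.ofDigits_cons, Nat.mul_mod_right, Nat.mul_div_cancel_left _ (by norm_num : 0 < 2)]

lemma moser_two_odd (x : ℕ) : moser 2 (2 * x + 1) = 4 * moser 2 x + 1 := by
  unfold moser
  rw [Nat.digits_def' (by norm_num : 1 < 2) (by omega)]
  have h1 : (2 * x + 1) % 2 = 1 := by omega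
  have h2 : (2 * x + 1) / 2 = x := by omega
  rw [h1, h2, Nat.ofDigits_cons]
  push_cast
  ring

lemma moser_two_bit (u ε : ℕ) (hε : ε < 2) :
    moser 2 (2 * u + ε) = 4 * moser 2 u + ε := by
  interval_cases ε
  · simpa using moser_two_even u
  · exact moser_two_odd u

lemma moser_two_pos {x : ℕ} (h : 0 < x) : 0 < moser 2 x := by
  induction x using Nat.strong_induction_on with
  | _ x ih =>
    rcases Nat.even_or_odd x with ⟨y, hy⟩ | ⟨y, hy⟩
    · have hx : x = 2 * y := by omega
      have hy' : 0 < y := by omega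
      rw [hx, moser_two_even]
      have := ih y (by omega) hy'
      omega
    · rw [hy, moser_two_odd]
      omega

lemma rep_unique (n : ℕ) : ∃! p : ℕ × ℕ, n = moser 2 p.1 + 2 * moser 2 p.2 := by
  induction n using Nat.strong_induction_on with
  | _ n ih =>
    rcases Nat.eq_zero_or_pos n with h0 | h0
    · subst h0
      refine ⟨(0, 0), by simp [moser_two_zero], ?_⟩
      rintro ⟨x, y⟩ h
      simp only at h
      have hx : x = 0 := by
        by_contra hx
        have := moser_two_pos (Nat.pos_of_ne_zero hx)
        omega
      have hy : y = 0 := by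
        by_contra hy
        have := moser_two_pos (Nat.pos_of_ne_zero hy)
        omega
      simp [hx, hy]
    · obtain ⟨⟨x', y'⟩, hq, huniq⟩ := ih (n / 4) (by omega)
      simp only at hq
      refine ⟨(2 * x' + n % 4 % 2, 2 * y' + n % 4 / 2), ?_, ?_⟩
      · simp only
        rw [moser_two_bit _ _ (by omega), moser_two_bit _ _ (by omega)]
        have := Nat.div_add_mod n 4
        omega
      · rintro ⟨x, y⟩ h
        simp only at h
        have hx2 := Nat.div_add_mod x 2
        have hy2 := Nat.div_add_mod y 2
        have hxm : moser 2 x = 4 * moser 2 (x / 2) + x % 2 := by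
          conv_lhs => rw [← hx2]
          exact moser_two_bit _ _ (Nat.mod_lt _ (by norm_num))
        have hym : moser 2 y = 4 * moser 2 (y / 2) + y % 2 := by
          conv_lhs => rw [← hy2]
          exact moser_two_bit _ _ (Nat.mod_lt _ (by norm_num))
        have hxlt : x % 2 < 2 := Nat.mod_lt _ (by norm_num)
        have hylt : y % 2 < 2 := Nat.mod_lt _ (by norm_num)
        have hn : n = 4 * (moser 2 (x / 2) + 2 * moser 2 (y / 2)) + (x % 2 + 2 * (y % 2)) := by
          omega
        have hmod : n % 4 = x % 2 + 2 * (y % 2) := by omega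
        have hdiv : n / 4 = moser 2 (x / 2) + 2 * moser 2 (y / 2) := by omega
        have hp := huniq (x / 2, y / 2) hdiv
        have h1 : x / 2 = x' := congrArg Prod.fst hp
        have h2 : y / 2 = y' := congrArg Prod.snd hp
        have : x = 2 * x' + n % 4 % 2 := by omega
        have : y = 2 * y' + n % 4 / 2 := by omega
        simp only [Prod.mk.injEq]
        omega

/-- For `a, b ≥ 1`, with `s_n(a,b) = a + b·(s^(2)_n − 1)`, every number `3a + 2bn`
(`n ≥ 0`) has exactly one representation `3a + 2bn = s_k(a,b) + 2·s_l(a,b)`, `k, l ≥ 1`. -/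
theorem arithmetic_progression_unique_representation (a b : ℕ) (ha : 1 ≤ a) (hb : 1 ≤ b)
    (n : ℕ) :
    ∃! kl : ℕ × ℕ, 1 ≤ kl.1 ∧ 1 ≤ kl.2 ∧
      3 * a + 2 * b * n =
        (a + b * (moserS 2 kl.1 - 1)) + 2 * (a + b * (moserS 2 kl.2 - 1)) := by
  obtain ⟨⟨x, y⟩, hxy, huniq⟩ := rep_unique n
  simp only at hxy
  have hS : ∀ k : ℕ, moserS 2 k - 1 = 2 * moser 2 (k - 1) := by
    intro k; simp [moserS]
  refine ⟨(x + 1, y + 1), ⟨by omega, by omega, ?_⟩, ?_⟩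
  · simp only [hS, Nat.add_sub_cancel]
    rw [hxy]; ring
  · rintro ⟨k, l⟩ ⟨hk, hl, heq⟩
    simp only [hS] at heq
    set M := moser 2 (k - 1) with hM
    set P := moser 2 (l - 1) with hP
    have heq' : 3 * a + 2 * b * n = 3 * a + 2 * b * (M + 2 * P) := by
      rw [heq]; ring
    have key : n = M + 2 * P := Nat.eq_of_mul_eq_mul_left (by omega)
      (Nat.add_left_cancel heq')
    have hp := huniq (k - 1, l - 1) key
    have h1 : k - 1 = x := congrArg Prod.fst hp
    have h2 : l - 1 = y := congrArg Prod.snd hp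
    simp only [Prod.mk.injEq]
    omega
end

section
/- Let S = {s^{(2)}_n : n ≥ 1} and S' = {2·s^{(2)}_n − 1 : n ≥ 1}. Then every even positive integer N can be written as N = t + t' with t, t' ∈ S ∪ S'. -/
/-- Extract the even-indexed binary digits of `m`. -/
def evb : ℕ → ℕ
  | 0 => 0
  | m + 1 => (m + 1) % 2 + 2 * evb ((m + 1) / 4)
decreasing_by omega

lemma moser_step_s18 (n : ℕ) : moser 2 n = n % 2 + 4 * moser 2 (n / 2) := by
  rcases Nat.eq_zero_or_pos n with h | h
  · subst h; simp [moser]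
  · unfold moser
    rw [Nat.digits_def' (by norm_num : 1 < 2) h, Nat.ofDigits_cons]
    norm_num

lemma evb_step (m : ℕ) (hm : 0 < m) : evb m = m % 2 + 2 * evb (m / 4) := by
  cases m with
  | zero => omega
  | succ k => rw [evb]

lemma key_s18 (m : ℕ) : moser 2 (evb m) + 2 * moser 2 (evb (m / 2)) = m := by
  induction m using Nat.strong_induction_on with
  | _ m ih =>
    rcases Nat.lt_or_ge m 2 with h | h
    · interval_cases m
      · simp [evb, moser]
      · have h1 : evb 1 = 1 := by rw [evb_step 1 (by omega)]; simp [evb]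
        have h0 : (1 : ℕ) / 2 = 0 := by norm_num
        rw [h0, h1]
        simp [moser_step_s18 1, moser, evb]
    · have h1 : moser 2 (evb m) = m % 2 + 4 * moser 2 (evb (m / 4)) := by
        have hm2 : (m % 2 + 2 * evb (m / 4)) % 2 = m % 2 := by omega
        have hd2 : (m % 2 + 2 * evb (m / 4)) / 2 = evb (m / 4) := by omega
        rw [evb_step m (by omega), moser_step_s18, hm2, hd2]
      have h2 : moser 2 (evb (m / 2)) = (m / 2) % 2 + 4 * moser 2 (evb (m / 4 / 2)) := by
        have hm2 : ((m / 2) % 2 + 2 * evb (m / 2 / 4)) % 2 = (m / 2) % 2 := by omega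
        have hd2 : ((m / 2) % 2 + 2 * evb (m / 2 / 4)) / 2 = evb (m / 2 / 4) := by omega
        have hdd : m / 2 / 4 = m / 4 / 2 := by omega
        rw [evb_step (m / 2) (by omega), moser_step_s18, hm2, hd2, hdd]
      have ih4 := ih (m / 4) (by omega)
      omega

/-- With `S = {s^(2)_n : n ≥ 1}` and `S' = {2·s^(2)_n − 1 : n ≥ 1}`, every even positive
integer is a sum of two elements of `S ∪ S'`. -/
theorem even_sum_of_two (N : ℕ) (hN : 0 < N) (hNe : Even N) :
    ∃ t t' : ℕ,
      t ∈ {x : ℕ | ∃ n, 1 ≤ n ∧ x = moserS 2 n} ∪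
            {x : ℕ | ∃ n, 1 ≤ n ∧ x = 2 * moserS 2 n - 1} ∧
      t' ∈ {x : ℕ | ∃ n, 1 ≤ n ∧ x = moserS 2 n} ∪
            {x : ℕ | ∃ n, 1 ≤ n ∧ x = 2 * moserS 2 n - 1} ∧
      N = t + t' := by
  obtain ⟨k, hk⟩ := hNe
  set m := N / 2 - 1 with hm
  have hNm : N = 2 * m + 2 := by omega
  refine ⟨moserS 2 (evb m + 1), 2 * moserS 2 (evb (m / 2) + 1) - 1, ?_, ?_, ?_⟩
  · left; exact ⟨evb m + 1, by omega, rfl⟩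
  · right; exact ⟨evb (m / 2) + 1, by omega, rfl⟩
  · have := key_s18 m
    simp only [moserS, Nat.add_sub_cancel]
    omega
end
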